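/- arXiv:0904.4535 — 10 statements merged into one kernel-verified Lean document; each statement's English description precedes it below -/
import Mathlib

section
/- Let (X,Σ,μ) be a σ-finite measure space, 1 ≤ a < b ≤ ∞, and ψ : (a,b) → (0,∞) continuous. Let f : X → ℝ be measurable with ‖f‖_{G(ψ)} < ∞, let (q(k))_{k≥1} be a sequence with q(k) ∈ (a,b), and let (g_k)_{k≥1} be measurable functions such that ∑_k g_k(x) = g(x) for μ-almost every x and S := ∑_{k=1}^∞ ψ(q(k)) |g_k|_{q(k)'} < ∞. Then f·g is μ-integrable and |∫_X f g dμ| ≤ ‖f‖_{G(ψ)} · S (generalized Hölder inequality). -/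
open MeasureTheory Filter Set
open scoped ENNReal Topology NNReal

noncomputable section

/-- The `L_p` (quasi-)norm `|f|_p = (∫ |f|^p dμ)^{1/p}` with values in `[0,∞]`. -/
def lpNorm {X : Type*} [MeasurableSpace X] (μ : Measure X) (f : X → ℝ) (p : ℝ) : ℝ≥0∞ :=
  (∫⁻ x, ENNReal.ofReal (|f x| ^ p) ∂μ) ^ (1 / p)

/-- The interval `(a, b)` of exponents, with possibly infinite right endpoint `b`. -/
def gIoo (a : ℝ) (b : ℝ≥0∞) : Set ℝ := {p : ℝ | a < p ∧ ENNReal.ofReal p < b}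

/-- The Grand Lebesgue norm `‖f‖_{G(ψ)} = sup_{p ∈ (a,b)} |f|_p / ψ(p)`. -/
def grandNorm {X : Type*} [MeasurableSpace X] (μ : Measure X) (ψ : ℝ → ℝ) (a : ℝ) (b : ℝ≥0∞)
    (f : X → ℝ) : ℝ≥0∞ :=
  ⨆ p ∈ gIoo a b, lpNorm μ f p / ENNReal.ofReal (ψ p)

/-- The conjugate exponent `q' = q/(q-1)`. -/
def conjExp (q : ℝ) : ℝ := q / (q - 1)

/-- A decomposition `g = ∑ₖ gₖ` (μ-a.e.) with exponents `q k ∈ (a,b)`, as used in the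
definition of the Small Lebesgue norm. -/
structure SLDecomp {X : Type*} [MeasurableSpace X] (μ : Measure X) (a : ℝ) (b : ℝ≥0∞)
    (g : X → ℝ) where
  gk : ℕ → X → ℝ
  q : ℕ → ℝ
  meas : ∀ k, Measurable (gk k)
  mem : ∀ k, q k ∈ gIoo a b
  sum : ∀ᵐ x ∂μ, HasSum (fun k => gk k x) (g x)

/-- The cost `∑ₖ ψ(q(k)) |gₖ|_{q(k)'}` of a decomposition. -/
def SLDecomp.cost {X : Type*} [MeasurableSpace X] {μ : Measure X} {a : ℝ} {b : ℝ≥0∞}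
    {g : X → ℝ} (d : SLDecomp μ a b g) (ψ : ℝ → ℝ) : ℝ≥0∞ :=
  ∑' k, ENNReal.ofReal (ψ (d.q k)) * lpNorm μ (d.gk k) (conjExp (d.q k))

/-- The (Bilateral) Small Lebesgue norm `‖g‖_{SL(ψ)}`. -/
def smallNorm {X : Type*} [MeasurableSpace X] (μ : Measure X) (ψ : ℝ → ℝ) (a : ℝ) (b : ℝ≥0∞)
    (g : X → ℝ) : ℝ≥0∞ :=
  ⨅ d : SLDecomp μ a b g, d.cost ψ

/-- The filter describing `p → b−` when `b ≤ ∞`. -/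
def rightEndFilter (b : ℝ≥0∞) : Filter ℝ := if b = ⊤ then atTop else 𝓝[<] b.toReal

/-- The measure `μ` is nonatomic. -/
def IsNonatomic {X : Type*} [MeasurableSpace X] (μ : Measure X) : Prop :=
  ∀ A : Set X, MeasurableSet A → 0 < μ A →
    ∃ B ⊆ A, MeasurableSet B ∧ 0 < μ B ∧ μ B < μ A

/-- The fundamental function of the Grand Lebesgue space: `φ(G(ψ), δ) = sup_p δ^{1/p}/ψ(p)`. -/
def fund (ψ : ℝ → ℝ) (a : ℝ) (b : ℝ≥0∞) (δ : ℝ≥0∞) : ℝ≥0∞ :=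
  ⨆ p ∈ gIoo a b, δ ^ (1 / p) / ENNReal.ofReal (ψ p)



lemma lpNorm_eq {X : Type*} [MeasurableSpace X] (μ : Measure X) (f : X → ℝ) {p : ℝ}
    (hp : 0 ≤ p) :
    _root_.lpNorm μ f p = (∫⁻ x, ENNReal.ofReal |f x| ^ p ∂μ) ^ (1 / p) := by
  simp only [_root_.lpNorm]
  congr 1
  refine lintegral_congr fun x => ?_
  rw [ENNReal.ofReal_rpow_of_nonneg (abs_nonneg _) hp]

/-- Generalized Hölder inequality between the Grand and Small Lebesgue spaces. -/
theorem generalized_holder {X : Type*} [MeasurableSpace X] (μ : Measure X) [SigmaFinite μ]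
    (a : ℝ) (b : ℝ≥0∞) (ha : 1 ≤ a) (hab : ENNReal.ofReal a < b)
    (ψ : ℝ → ℝ) (hψc : ContinuousOn ψ (gIoo a b)) (hψpos : ∀ p ∈ gIoo a b, 0 < ψ p)
    (f g : X → ℝ) (hf : Measurable f) (hg : Measurable g)
    (hfG : grandNorm μ ψ a b f < ⊤)
    (q : ℕ → ℝ) (hq : ∀ k, q k ∈ gIoo a b)
    (gk : ℕ → X → ℝ) (hgk : ∀ k, Measurable (gk k))
    (hsum : ∀ᵐ x ∂μ, HasSum (fun k => gk k x) (g x))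
    (S : ℝ≥0∞) (hS : S = ∑' k, ENNReal.ofReal (ψ (q k)) * lpNorm μ (gk k) (conjExp (q k)))
    (hSfin : S < ⊤) :
    Integrable (fun x => f x * g x) μ ∧
      ENNReal.ofReal |∫ x, f x * g x ∂μ| ≤ grandNorm μ ψ a b f * S := by
  classical
  set F : X → ℝ≥0∞ := fun x => ENNReal.ofReal |f x| with hFdef
  set G : ℕ → X → ℝ≥0∞ := fun k x => ENNReal.ofReal |gk k x| with hGdef
  have hFmeas : Measurable F := hf.abs.ennreal_ofReal
  have hGmeas : ∀ k, Measurable (G k) := fun k => (hgk k).abs.ennreal_ofReal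
  have hq1 : ∀ k, 1 < q k := fun k => lt_of_le_of_lt ha (hq k).1
  have hconj : ∀ k, (q k).HolderConjugate (conjExp (q k)) := fun k =>
    Real.HolderConjugate.conjExponent (hq1 k)
  -- pointwise a.e. bound |f x * g x| ≤ F x * ∑' k, G k x
  have hae : ∀ᵐ x ∂μ, ENNReal.ofReal |f x * g x| ≤ F x * ∑' k, G k x := by
    filter_upwards [hsum] with x hx
    have hgle : ENNReal.ofReal |g x| ≤ ∑' k, G k x := by
      have htend : Tendsto (fun n => ENNReal.ofReal |∑ k ∈ Finset.range n, gk k x|) atTop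
          (𝓝 (ENNReal.ofReal |g x|)) :=
        (ENNReal.continuous_ofReal.tendsto _).comp
          ((continuous_abs.tendsto _).comp hx.tendsto_sum_nat)
      refine le_of_tendsto' htend fun n => ?_
      calc ENNReal.ofReal |∑ k ∈ Finset.range n, gk k x|
          ≤ ENNReal.ofReal (∑ k ∈ Finset.range n, |gk k x|) :=
            ENNReal.ofReal_le_ofReal (Finset.abs_sum_le_sum_abs _ _)
        _ = ∑ k ∈ Finset.range n, G k x := by
            rw [ENNReal.ofReal_sum_of_nonneg fun k _ => abs_nonneg _]
        _ ≤ ∑' k, G k x := ENNReal.sum_le_tsum _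
    calc ENNReal.ofReal |f x * g x| = F x * ENNReal.ofReal |g x| := by
          rw [abs_mul, ENNReal.ofReal_mul (abs_nonneg _)]
      _ ≤ F x * ∑' k, G k x := mul_le_mul_right hgle _
  -- per-term Hölder bound
  have hkey : ∀ k, ∫⁻ x, F x * G k x ∂μ ≤
      grandNorm μ ψ a b f * (ENNReal.ofReal (ψ (q k)) * lpNorm μ (gk k) (conjExp (q k))) := by
    intro k
    have h1 : ∫⁻ x, F x * G k x ∂μ ≤ lpNorm μ f (q k) * lpNorm μ (gk k) (conjExp (q k)) := by
      rw [lpNorm_eq μ f (zero_le_one.trans (hq1 k).le),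
        lpNorm_eq μ (gk k) (zero_le_one.trans (hconj k).symm.lt.le)]
      exact ENNReal.lintegral_mul_le_Lp_mul_Lq μ (hconj k) hFmeas.aemeasurable
        (hGmeas k).aemeasurable
    have hψk : 0 < ψ (q k) := hψpos _ (hq k)
    have h2 : lpNorm μ f (q k) ≤ grandNorm μ ψ a b f * ENNReal.ofReal (ψ (q k)) := by
      have hle : lpNorm μ f (q k) / ENNReal.ofReal (ψ (q k)) ≤ grandNorm μ ψ a b f := by
        exact le_biSup (fun p => lpNorm μ f p / ENNReal.ofReal (ψ p)) (hq k)
      rw [ENNReal.div_le_iff_le_mul (Or.inl (by simp [hψk])) (Or.inl ENNReal.ofReal_ne_top)] at hle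
      exact hle
    calc ∫⁻ x, F x * G k x ∂μ ≤ lpNorm μ f (q k) * lpNorm μ (gk k) (conjExp (q k)) := h1
      _ ≤ grandNorm μ ψ a b f * ENNReal.ofReal (ψ (q k)) * lpNorm μ (gk k) (conjExp (q k)) :=
          mul_le_mul_left h2 _
      _ = grandNorm μ ψ a b f * (ENNReal.ofReal (ψ (q k)) * lpNorm μ (gk k) (conjExp (q k))) := by
          ring
  -- main lintegral bound
  have hmain : ∫⁻ x, ENNReal.ofReal |f x * g x| ∂μ ≤ grandNorm μ ψ a b f * S := by
    calc ∫⁻ x, ENNReal.ofReal |f x * g x| ∂μ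
        ≤ ∫⁻ x, F x * ∑' k, G k x ∂μ := lintegral_mono_ae hae
      _ = ∫⁻ x, ∑' k, F x * G k x ∂μ := by
          refine lintegral_congr fun x => ?_
          rw [ENNReal.tsum_mul_left]
      _ = ∑' k, ∫⁻ x, F x * G k x ∂μ :=
          lintegral_tsum fun k => (hFmeas.mul (hGmeas k)).aemeasurable
      _ ≤ ∑' k, grandNorm μ ψ a b f *
            (ENNReal.ofReal (ψ (q k)) * lpNorm μ (gk k) (conjExp (q k))) :=
          ENNReal.tsum_le_tsum hkey
      _ = grandNorm μ ψ a b f * S := by rw [ENNReal.tsum_mul_left, hS]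
  have hfin : ∫⁻ x, ENNReal.ofReal |f x * g x| ∂μ < ⊤ :=
    lt_of_le_of_lt hmain (ENNReal.mul_lt_top hfG hSfin)
  have hInt : Integrable (fun x => f x * g x) μ := by
    refine ⟨(hf.mul hg).aestronglyMeasurable, ?_⟩
    rw [HasFiniteIntegral]
    refine lt_of_le_of_lt (le_of_eq (lintegral_congr fun x => ?_)) hfin
    rw [← ofReal_norm_eq_enorm, Real.norm_eq_abs]
  refine ⟨hInt, ?_⟩
  calc ENNReal.ofReal |∫ x, f x * g x ∂μ|
      ≤ ENNReal.ofReal (∫ x, ‖f x * g x‖ ∂μ) := by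
        refine ENNReal.ofReal_le_ofReal ?_
        rw [← Real.norm_eq_abs]
        exact norm_integral_le_integral_norm _
    _ = ∫⁻ x, ‖f x * g x‖ₑ ∂μ := ofReal_integral_norm_eq_lintegral_enorm hInt
    _ = ∫⁻ x, ENNReal.ofReal |f x * g x| ∂μ := by
        refine lintegral_congr fun x => ?_
        rw [← ofReal_norm_eq_enorm, Real.norm_eq_abs]
    _ ≤ grandNorm μ ψ a b f * S := hmain

end
end

section
/- Let 1 < a < b ≤ ∞ and let ψ : (a,b) → (0,∞) be continuous with inf_{p∈(a,b)} ψ(p) > 0. Let g : ℕ → [0,∞) and suppose there is a constant K < ∞ such that for every f : ℕ → [0,∞) satisfying sup_{p∈(a,b)} (∑_{n} f_n^p)^{1/p}/ψ(p) ≤ 1 one has ∑_{n} f_n g_n ≤ K. Then ∑_{n} g_n^{a/(a−1)} < ∞, i.e. g ∈ ℓ^{a'} where a' = a/(a−1). -/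
open MeasureTheory Filter Set
open scoped ENNReal Topology NNReal

noncomputable section

/-- If a nonnegative sequence `g` acts boundedly (by `K`) on the unit ball of the
Grand Lebesgue sequence space `G(ψ)`, then `g ∈ ℓ^{a'}` with `a' = a/(a-1)`. -/
theorem mem_lp_conj_of_bounded_action
    (a : ℝ) (b : ℝ≥0∞) (ha : 1 < a) (hab : ENNReal.ofReal a < b)
    (ψ : ℝ → ℝ) (hψc : ContinuousOn ψ (gIoo a b))
    (hψinf : ∃ c : ℝ, 0 < c ∧ ∀ p ∈ gIoo a b, c ≤ ψ p)
    (g : ℕ → ℝ) (hg : ∀ n, 0 ≤ g n)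
    (K : ℝ)
    (hK : ∀ f : ℕ → ℝ, (∀ n, 0 ≤ f n) →
      (⨆ p ∈ gIoo a b, (∑' n, ENNReal.ofReal (f n ^ p)) ^ (1 / p) / ENNReal.ofReal (ψ p)) ≤ 1 →
      (∑' n, ENNReal.ofReal (f n * g n)) ≤ ENNReal.ofReal K) :
    (∑' n, ENNReal.ofReal (g n ^ (a / (a - 1)))) < ⊤ := by
  obtain ⟨c, hc, hcψ⟩ := hψinf
  have ha1 : (0:ℝ) < a - 1 := by linarith
  have ha0 : (0:ℝ) < a := by linarith
  set q : ℝ := a / (a - 1) with hqdef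
  have hq1 : 1 < q := (one_lt_div ha1).mpr (by linarith)
  have hq0 : 0 < q := by linarith
  have hqa : (q - 1) * a = q := by rw [hqdef]; field_simp; ring
  have hqinv : 1 - 1/a = 1/q := by rw [hqdef]; field_simp
  have key : ∀ s : Finset ℕ, ∑ n ∈ s, g n ^ q ≤ (max K 0 / c) ^ q := by
    intro s
    set S := ∑ n ∈ s, g n ^ q with hSdef
    have hS0 : 0 ≤ S := Finset.sum_nonneg fun n _ => Real.rpow_nonneg (hg n) q
    rcases hS0.eq_or_lt with h0 | hSpos
    · rw [← h0]; positivity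
    set t : ℝ := S ^ (1/a) with htdef
    have ht0 : 0 < t := Real.rpow_pos_of_pos hSpos _
    set f : ℕ → ℝ := fun n => if n ∈ s then c * g n ^ (q - 1) / t else 0 with hfdef
    have hf0 : ∀ n, 0 ≤ f n := by
      intro n
      simp only [hfdef]
      split
      · exact div_nonneg (mul_nonneg hc.le (Real.rpow_nonneg (hg n) _)) ht0.le
      · exact le_refl 0
    have hta : t ^ a = S := by
      rw [htdef, ← Real.rpow_mul hS0, one_div_mul_cancel ha0.ne', Real.rpow_one]
    have hfa : ∀ n ∈ s, f n ^ a = c ^ a * g n ^ q / S := by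
      intro n hn
      simp only [hfdef, if_pos hn]
      rw [Real.div_rpow (mul_nonneg hc.le (Real.rpow_nonneg (hg n) _)) ht0.le,
        Real.mul_rpow hc.le (Real.rpow_nonneg (hg n) _),
        ← Real.rpow_mul (hg n), hqa, hta]
    have hsum_fa : ∑ n ∈ s, f n ^ a = c ^ a := by
      rw [Finset.sum_congr rfl hfa]
      rw [← Finset.sum_div, ← Finset.mul_sum, ← hSdef, mul_div_assoc,
        div_self hSpos.ne', mul_one]
    have hfc : ∀ n, f n ≤ c := by
      intro n
      by_cases hn : n ∈ s
      · by_contra hcon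
        push_neg at hcon
        have h1 : f n ^ a ≤ c ^ a := by
          calc f n ^ a ≤ ∑ m ∈ s, f m ^ a :=
                Finset.single_le_sum (fun m _ => Real.rpow_nonneg (hf0 m) a) hn
            _ = c ^ a := hsum_fa
        exact absurd h1 (not_le.mpr (Real.rpow_lt_rpow hc.le hcon ha0))
      · simp only [hfdef, if_neg hn]; exact hc.le
    have hnorm : (⨆ p ∈ gIoo a b,
        (∑' n, ENNReal.ofReal (f n ^ p)) ^ (1 / p) / ENNReal.ofReal (ψ p)) ≤ 1 := by
      refine iSup₂_le fun p hp => ?_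
      obtain ⟨hap, hpb⟩ := hp
      have hp0 : (0:ℝ) < p := by linarith
      have hreal : ∑ n ∈ s, f n ^ p ≤ c ^ p := by
        have hpt : ∀ n ∈ s, f n ^ p ≤ c ^ (p - a) * f n ^ a := by
          intro n _
          rcases (hf0 n).eq_or_lt with h | h
          · rw [← h, Real.zero_rpow hp0.ne', Real.zero_rpow ha0.ne', mul_zero]
          · have he : f n ^ p = f n ^ (p - a) * f n ^ a := by
              rw [← Real.rpow_add h]; ring_nf
            rw [he]
            exact mul_le_mul_of_nonneg_right
              (Real.rpow_le_rpow (hf0 n) (hfc n) (by linarith))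
              (Real.rpow_nonneg (hf0 n) a)
        calc ∑ n ∈ s, f n ^ p ≤ ∑ n ∈ s, c ^ (p - a) * f n ^ a := Finset.sum_le_sum hpt
          _ = c ^ (p - a) * c ^ a := by rw [← Finset.mul_sum, hsum_fa]
          _ = c ^ p := by rw [← Real.rpow_add hc, sub_add_cancel]
      have hsum : (∑' n, ENNReal.ofReal (f n ^ p)) ≤ ENNReal.ofReal (c ^ p) := by
        rw [tsum_eq_sum (s := s)
          (by intro n hn; simp [hfdef, if_neg hn, Real.zero_rpow hp0.ne'])]
        rw [← ENNReal.ofReal_sum_of_nonneg (fun n _ => Real.rpow_nonneg (hf0 n) p)]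
        exact ENNReal.ofReal_le_ofReal hreal
      have hroot : (∑' n, ENNReal.ofReal (f n ^ p)) ^ (1/p) ≤ ENNReal.ofReal c := by
        calc (∑' n, ENNReal.ofReal (f n ^ p)) ^ (1/p)
            ≤ (ENNReal.ofReal (c ^ p)) ^ (1/p) :=
              ENNReal.rpow_le_rpow hsum (by positivity)
          _ = ENNReal.ofReal c := by
              have hcp : (c ^ p : ℝ) ^ (1/p) = c := by
                rw [← Real.rpow_mul hc.le, mul_one_div_cancel hp0.ne', Real.rpow_one]
              rw [ENNReal.ofReal_rpow_of_pos (Real.rpow_pos_of_pos hc p), hcp]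
      refine ENNReal.div_le_of_le_mul ?_
      rw [one_mul]
      exact hroot.trans (ENNReal.ofReal_le_ofReal (hcψ p ⟨hap, hpb⟩))
    have hKf := hK f hf0 hnorm
    have hts : (∑' n, ENNReal.ofReal (f n * g n)) = ENNReal.ofReal (c * S ^ (1/q)) := by
      rw [tsum_eq_sum (s := s) (by intro n hn; simp [hfdef, if_neg hn])]
      rw [← ENNReal.ofReal_sum_of_nonneg (fun n _ => mul_nonneg (hf0 n) (hg n))]
      congr 1
      have hterm : ∀ n ∈ s, f n * g n = c / t * g n ^ q := by
        intro n hn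
        simp only [hfdef, if_pos hn]
        rcases (hg n).eq_or_lt with h | h
        · simp [← h, Real.zero_rpow (show q - 1 ≠ 0 by nlinarith), Real.zero_rpow hq0.ne']
        · have : g n ^ (q - 1) * g n = g n ^ q := by
            nth_rewrite 2 [← Real.rpow_one (g n)]
            rw [← Real.rpow_add h]; ring_nf
          field_simp
          exact this
      rw [Finset.sum_congr rfl hterm, ← Finset.mul_sum, ← hSdef]
      have hSt : S / t = S ^ (1/q) := by
        rw [htdef, ← hqinv, Real.rpow_sub hSpos, Real.rpow_one]
      rw [div_mul_eq_mul_div, mul_div_assoc, hSt]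
    have hle : c * S ^ (1/q) ≤ max K 0 := by
      rw [hts] at hKf
      have h2 : ENNReal.ofReal (c * S ^ (1/q)) ≤ ENNReal.ofReal (max K 0) :=
        hKf.trans (ENNReal.ofReal_le_ofReal (le_max_left _ _))
      exact (ENNReal.ofReal_le_ofReal_iff (le_max_right _ _)).mp h2
    have h3 : S ^ (1/q) ≤ max K 0 / c := by
      rw [le_div_iff₀ hc]; linarith [hle]
    calc S = (S ^ (1/q)) ^ q := by
          rw [← Real.rpow_mul hS0, one_div_mul_cancel hq0.ne', Real.rpow_one]
      _ ≤ (max K 0 / c) ^ q := Real.rpow_le_rpow (Real.rpow_nonneg hS0 _) h3 hq0.le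
  have hfin : (∑' n, ENNReal.ofReal (g n ^ q)) ≤ ENNReal.ofReal ((max K 0 / c) ^ q) := by
    rw [ENNReal.tsum_eq_iSup_sum]
    refine iSup_le fun s => ?_
    rw [← ENNReal.ofReal_sum_of_nonneg (fun n _ => Real.rpow_nonneg (hg n) q)]
    exact ENNReal.ofReal_le_ofReal (key s)
  exact lt_of_le_of_lt hfin ENNReal.ofReal_lt_top

end
end

section
/- Let (X,Σ,μ) be a σ-finite measure space, 1 ≤ a < b ≤ ∞, and ψ : (a,b) → (0,∞) continuous. Let f : X → ℝ be measurable with f ≥ 0 μ-a.e., 0 < ‖f‖_{G(ψ)} < ∞, |f|_p < ∞ for every p ∈ (a,b), and lim_{p→a+} |f|_p/ψ(p) = 0 = lim_{p→b−} |f|_p/ψ(p). Then there exist σ ∈ (a,b) and a measurable g : X → [0,∞) with 0 < |g|_{σ'} < ∞ such that ∫_X f g dμ = ‖f‖_{G(ψ)} · ‖g‖_{SL(ψ)}; in particular the generalized Hölder inequality between G(ψ) and SL(ψ) is attained on f. -/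
open MeasureTheory Filter Set
open scoped ENNReal Topology NNReal

noncomputable section

private lemma ofReal_hasSum_le {u : ℕ → ℝ} {s : ℝ} (h : HasSum u s) :
    ENNReal.ofReal s ≤ ∑' k, ENNReal.ofReal (u k) := by
  refine le_of_tendsto (ENNReal.continuous_ofReal.continuousAt.tendsto.comp h) ?_
  filter_upwards with F
  calc ENNReal.ofReal (∑ k ∈ F, u k) ≤ ∑ k ∈ F, ENNReal.ofReal (u k) := by
        classical
        induction F using Finset.induction with
        | empty => simp
        | insert _ _ hk ih =>
          rw [Finset.sum_insert hk, Finset.sum_insert hk]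
          exact le_trans ENNReal.ofReal_add_le (add_le_add le_rfl ih)
    _ ≤ ∑' k, ENNReal.ofReal (u k) := ENNReal.sum_le_tsum F

private lemma pair_holder {X : Type*} [MeasurableSpace X] (μ : Measure X) {q : ℝ} (hq : 1 < q)
    {f u : X → ℝ} (hf : Measurable f) (hu : Measurable u) :
    ∫⁻ x, ENNReal.ofReal (|f x| * |u x|) ∂μ ≤ lpNorm μ f q * lpNorm μ u (conjExp q) := by
  have hpq : q.HolderConjugate (conjExp q) := Real.HolderConjugate.conjExponent hq
  have h := ENNReal.lintegral_mul_le_Lp_mul_Lq μ hpq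
    (f := fun x => ENNReal.ofReal |f x|) (g := fun x => ENNReal.ofReal |u x|)
    (hf.abs.ennreal_ofReal.aemeasurable) (hu.abs.ennreal_ofReal.aemeasurable)
  calc ∫⁻ x, ENNReal.ofReal (|f x| * |u x|) ∂μ
      = ∫⁻ x, (fun x => ENNReal.ofReal |f x|) x * (fun x => ENNReal.ofReal |u x|) x ∂μ := by
        simp_rw [ENNReal.ofReal_mul (abs_nonneg _)]
    _ ≤ _ := h
    _ = lpNorm μ f q * lpNorm μ u (conjExp q) := by
        unfold _root_.lpNorm
        have e1 : ∀ x, ENNReal.ofReal |f x| ^ q = ENNReal.ofReal (|f x| ^ q) := fun x =>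
          ENNReal.ofReal_rpow_of_nonneg (abs_nonneg _) hpq.nonneg
        have e2 : ∀ x, ENNReal.ofReal |u x| ^ conjExp q = ENNReal.ofReal (|u x| ^ conjExp q) :=
          fun x => ENNReal.ofReal_rpow_of_nonneg (abs_nonneg _) hpq.symm.nonneg
        simp_rw [e1, e2]

private lemma lintegral_abs_rpow_cont {X : Type*} [MeasurableSpace X] (μ : Measure X)
    {f : X → ℝ} (hf : Measurable f) {c d : ℝ} (hc : 0 < c)
    (hfc : ∫⁻ x, ENNReal.ofReal (|f x| ^ c) ∂μ ≠ ⊤)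
    (hfd : ∫⁻ x, ENNReal.ofReal (|f x| ^ d) ∂μ ≠ ⊤) :
    ContinuousOn (fun p => ∫⁻ x, ENNReal.ofReal (|f x| ^ p) ∂μ) (Icc c d) := by
  intro p0 hp0
  refine tendsto_lintegral_filter_of_dominated_convergence
    (fun x => ENNReal.ofReal (|f x| ^ c) + ENNReal.ofReal (|f x| ^ d)) ?_ ?_ ?_ ?_
  · exact Eventually.of_forall fun p => (hf.abs.pow measurable_const).ennreal_ofReal
  · filter_upwards [eventually_mem_nhdsWithin] with p hp
    refine Eventually.of_forall fun x => ?_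
    rcases le_total (|f x|) 1 with h1 | h1
    · rcases eq_or_lt_of_le (abs_nonneg (f x)) with h0 | h0
      · simp [← h0, Real.zero_rpow (lt_of_lt_of_le hc hp.1).ne']
      · exact le_trans (le_trans (ENNReal.ofReal_le_ofReal
          (Real.rpow_le_rpow_of_exponent_ge h0 h1 hp.1)) le_self_add) le_rfl
    · exact le_trans (ENNReal.ofReal_le_ofReal
        (Real.rpow_le_rpow_of_exponent_le h1 hp.2)) le_add_self
  · rw [lintegral_add_left ((hf.abs.pow measurable_const).ennreal_ofReal)]
    exact ENNReal.add_ne_top.2 ⟨hfc, hfd⟩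
  · refine Eventually.of_forall fun x => ?_
    have hbase : Tendsto (fun p : ℝ => |f x| ^ p) (𝓝[Icc c d] p0) (𝓝 (|f x| ^ p0)) :=
      Filter.Tendsto.rpow tendsto_const_nhds
        (tendsto_nhdsWithin_of_tendsto_nhds tendsto_id) (Or.inr (lt_of_lt_of_le hc hp0.1))
    exact (ENNReal.continuous_ofReal.continuousAt.tendsto).comp hbase

private lemma smallNorm_le_single {X : Type*} [MeasurableSpace X] (μ : Measure X) (ψ : ℝ → ℝ)
    {a : ℝ} {b : ℝ≥0∞} {σ : ℝ} (hσ : σ ∈ gIoo a b) (hσ1 : 1 < σ)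
    {g : X → ℝ} (hg : Measurable g) :
    smallNorm μ ψ a b g ≤ ENNReal.ofReal (ψ σ) * lpNorm μ g (conjExp σ) := by
  classical
  have ht : 0 < conjExp σ := div_pos (lt_trans one_pos hσ1) (sub_pos.2 hσ1)
  let d : SLDecomp μ a b g :=
    { gk := fun k => if k = 0 then g else 0
      q := fun _ => σ
      meas := fun k => by split <;> [exact hg; exact measurable_const]
      mem := fun _ => hσ
      sum := Eventually.of_forall fun x => by
        have := hasSum_ite_eq (0 : ℕ) (g x)
        refine this.congr_fun fun k => ?_
        by_cases hk : k = 0 <;> simp [hk] }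
  refine le_trans (iInf_le _ d) (le_of_eq ?_)
  unfold SLDecomp.cost
  refine tsum_eq_single 0 fun k hk => ?_
  have hzero : d.gk k = (0 : X → ℝ) := by simp [d, hk]
  rw [hzero]
  have : lpNorm μ (0 : X → ℝ) (conjExp σ) = 0 := by
    unfold _root_.lpNorm
    have hz : ∀ x : X, ENNReal.ofReal (|(0 : X → ℝ) x| ^ conjExp σ) = 0 := fun x => by
      simp [Real.zero_rpow ht.ne']
    simp_rw [hz, lintegral_zero]
    exact ENNReal.zero_rpow_of_pos (one_div_pos.2 ht)
  rw [this, mul_zero]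

private lemma holder_GS {X : Type*} [MeasurableSpace X] {μ : Measure X} {a : ℝ} {b : ℝ≥0∞}
    (ha : 1 ≤ a) {f g : X → ℝ} (hf : Measurable f) (hfpos : ∀ᵐ x ∂μ, 0 ≤ f x)
    (d : SLDecomp μ a b g) :
    ∫⁻ x, ENNReal.ofReal (f x * g x) ∂μ
      ≤ ∑' k, lpNorm μ f (d.q k) * lpNorm μ (d.gk k) (conjExp (d.q k)) := by
  have step1 : ∫⁻ x, ENNReal.ofReal (f x * g x) ∂μ
      ≤ ∫⁻ x, ∑' k, ENNReal.ofReal (|f x| * |d.gk k x|) ∂μ := by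
    refine lintegral_mono_ae ?_
    filter_upwards [hfpos, d.sum] with x hx hsum
    have h1 : HasSum (fun k => f x * d.gk k x) (f x * g x) := hsum.mul_left _
    refine le_trans (ofReal_hasSum_le h1) (ENNReal.tsum_le_tsum fun k => ?_)
    refine ENNReal.ofReal_le_ofReal ?_
    calc f x * d.gk k x ≤ |f x * d.gk k x| := le_abs_self _
      _ = |f x| * |d.gk k x| := abs_mul _ _
  have step2 : ∫⁻ x, ∑' k, ENNReal.ofReal (|f x| * |d.gk k x|) ∂μ
      = ∑' k, ∫⁻ x, ENNReal.ofReal (|f x| * |d.gk k x|) ∂μ :=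
    lintegral_tsum fun k => (hf.abs.mul (d.meas k).abs).ennreal_ofReal.aemeasurable
  refine le_trans step1 (le_trans (le_of_eq step2) (ENNReal.tsum_le_tsum fun k => ?_))
  exact pair_holder μ (lt_of_le_of_lt ha (d.mem k).1) hf (d.meas k)

/-- For a nonnegative `f ∈ G°(ψ)` with `0 < ‖f‖_{G(ψ)} < ∞`, there are `σ ∈ (a,b)` and a
nonnegative measurable `g` with `0 < |g|_{σ'} < ∞` on which the generalized Hölder
inequality between `G(ψ)` and `SL(ψ)` becomes an equality. -/
theorem holder_attained {X : Type*} [MeasurableSpace X] (μ : Measure X) [SigmaFinite μ]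
    (a : ℝ) (b : ℝ≥0∞) (ha : 1 ≤ a) (hab : ENNReal.ofReal a < b)
    (ψ : ℝ → ℝ) (hψc : ContinuousOn ψ (gIoo a b)) (hψpos : ∀ p ∈ gIoo a b, 0 < ψ p)
    (f : X → ℝ) (hf : Measurable f) (hfpos : ∀ᵐ x ∂μ, 0 ≤ f x)
    (hf0 : 0 < grandNorm μ ψ a b f) (hfG : grandNorm μ ψ a b f < ⊤)
    (hfin : ∀ p ∈ gIoo a b, lpNorm μ f p < ⊤)
    (hlima : Tendsto (fun p => lpNorm μ f p / ENNReal.ofReal (ψ p)) (𝓝[>] a) (𝓝 0))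
    (hlimb : Tendsto (fun p => lpNorm μ f p / ENNReal.ofReal (ψ p)) (rightEndFilter b) (𝓝 0)) :
    ∃ σ ∈ gIoo a b, ∃ g : X → ℝ, Measurable g ∧ (∀ x, 0 ≤ g x) ∧
      0 < lpNorm μ g (conjExp σ) ∧ lpNorm μ g (conjExp σ) < ⊤ ∧
      ∫⁻ x, ENNReal.ofReal (f x * g x) ∂μ = grandNorm μ ψ a b f * smallNorm μ ψ a b g := by
  classical
  set G := grandNorm μ ψ a b f with hGdef
  set F : ℝ → ℝ≥0∞ := fun p => lpNorm μ f p / ENNReal.ofReal (ψ p) with hFdef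
  have hGsup : G = ⨆ p ∈ gIoo a b, F p := rfl
  have hε0 : (0 : ℝ≥0∞) < G / 2 := ENNReal.half_pos hf0.ne'
  have hεG : G / 2 < G := ENNReal.half_lt_self hf0.ne' hfG.ne
  obtain ⟨c, hc, hcA⟩ : ∃ c, a < c ∧ ∀ p ∈ Ioo a c, F p < G / 2 := by
    have hevA : ∀ᶠ p in 𝓝[>] a, F p < G / 2 := hlima.eventually_lt_const hε0
    rcases mem_nhdsGT_iff_exists_Ioo_subset.1 hevA with ⟨c, hc, hsub⟩
    exact ⟨c, hc, fun p hp => hsub hp⟩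
  obtain ⟨lo, hi, hlom, hhim, hlohi, htail⟩ :
      ∃ lo hi : ℝ, lo ∈ gIoo a b ∧ hi ∈ gIoo a b ∧ lo ≤ hi ∧
        ∀ p ∈ gIoo a b, p ∉ Icc lo hi → F p < G / 2 := by
    by_cases hb : b = ⊤
    · rw [rightEndFilter, if_pos hb] at hlimb
      have hevB : ∀ᶠ p in atTop, F p < G / 2 := hlimb.eventually_lt_const hε0
      rcases eventually_atTop.1 hevB with ⟨dd, hdd⟩
      refine ⟨(a + c) / 2, max dd ((a + c) / 2), ⟨by linarith, by simp [hb]⟩,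
        ⟨lt_of_lt_of_le (by linarith) (le_max_right _ _), by simp [hb]⟩, le_max_right _ _, ?_⟩
      intro p hp hpK
      rcases not_and_or.1 hpK with h | h
      · push_neg at h
        exact hcA p ⟨hp.1, by linarith⟩
      · push_neg at h
        exact hdd p (le_of_lt (lt_of_le_of_lt (le_max_left _ _) h))
    · rw [rightEndFilter, if_neg hb] at hlimb
      set B := b.toReal with hB
      have haB : a < B := (ENNReal.ofReal_lt_iff_lt_toReal (by linarith) hb).1 hab
      have hmemIff : ∀ p : ℝ, p ∈ gIoo a b ↔ a < p ∧ p < B := by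
        intro p
        constructor
        · rintro ⟨h1, h2⟩
          exact ⟨h1, (ENNReal.ofReal_lt_iff_lt_toReal (by linarith) hb).1 h2⟩
        · rintro ⟨h1, h2⟩
          exact ⟨h1, (ENNReal.ofReal_lt_iff_lt_toReal (by linarith) hb).2 h2⟩
      have hevB : ∀ᶠ p in 𝓝[<] B, F p < G / 2 := hlimb.eventually_lt_const hε0
      rcases mem_nhdsLT_iff_exists_Ioo_subset.1 hevB with ⟨dd, hdd, hsub⟩
      have hminaB : a < min c B := lt_min hc haB
      have hlo2 : (a + min c B) / 2 < min c B := by linarith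
      have hloB : (a + min c B) / 2 < B := lt_of_lt_of_le hlo2 (min_le_right _ _)
      have hmaxB : max dd ((a + min c B) / 2) < B := max_lt hdd hloB
      have hhi1 : max dd ((a + min c B) / 2) < (max dd ((a + min c B) / 2) + B) / 2 := by
        linarith
      have hhi2 : (max dd ((a + min c B) / 2) + B) / 2 < B := by linarith
      have hlo1 : a < (a + min c B) / 2 := by linarith
      refine ⟨(a + min c B) / 2, (max dd ((a + min c B) / 2) + B) / 2,
        (hmemIff _).2 ⟨hlo1, hloB⟩,
        (hmemIff _).2 ⟨lt_of_lt_of_le hlo1 (le_trans (le_max_right _ _) (le_of_lt hhi1)), hhi2⟩,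
        le_trans (le_max_right _ _) (le_of_lt hhi1), ?_⟩
      intro p hp hpK
      rw [hmemIff] at hp
      rcases not_and_or.1 hpK with h | h
      · push_neg at h
        exact hcA p ⟨hp.1, lt_of_lt_of_le (lt_of_lt_of_le h (le_of_lt hlo2)) (min_le_left _ _)⟩
      · push_neg at h
        exact hsub ⟨lt_of_le_of_lt (le_trans (le_max_left _ _) (le_of_lt hhi1)) h, hp.2⟩
  have hKsub : Icc lo hi ⊆ gIoo a b := fun p hp =>
    ⟨lt_of_lt_of_le hlom.1 hp.1, lt_of_le_of_lt (ENNReal.ofReal_le_ofReal hp.2) hhim.2⟩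
  set Φ : ℝ → ℝ≥0∞ := fun p => ∫⁻ x, ENNReal.ofReal (|f x| ^ p) ∂μ with hΦdef
  have hlp : ∀ p : ℝ, lpNorm μ f p = Φ p ^ (1 / p) := fun p => rfl
  have hΦtop : ∀ p ∈ gIoo a b, Φ p ≠ ⊤ := by
    intro p hp htop
    have h1 := hfin p hp
    have hppos : 0 < p := lt_of_lt_of_le (lt_of_lt_of_le one_pos ha) (le_of_lt hp.1)
    rw [hlp p, htop, ENNReal.top_rpow_of_pos (one_div_pos.2 hppos)] at h1
    exact (lt_irrefl _ h1).elim
  have hlo0 : (0:ℝ) < lo := lt_of_lt_of_le (lt_of_lt_of_le one_pos ha) (le_of_lt hlom.1)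
  have hΦcont : ContinuousOn Φ (Icc lo hi) :=
    lintegral_abs_rpow_cont μ hf hlo0 (hΦtop lo hlom) (hΦtop hi hhim)
  have heq : ∀ p ∈ Icc lo hi, F p = ENNReal.ofReal ((Φ p).toReal ^ (1 / p) / ψ p) := by
    intro p hp
    have hm := hKsub hp
    have hψp : 0 < ψ p := hψpos _ hm
    have hppos : 0 < p := lt_of_lt_of_le hlo0 hp.1
    rw [show F p = Φ p ^ (1 / p) / ENNReal.ofReal (ψ p) from rfl,
      ENNReal.ofReal_div_of_pos hψp,
      ← ENNReal.ofReal_rpow_of_nonneg ENNReal.toReal_nonneg (one_div_nonneg.2 (le_of_lt hppos)),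
      ENNReal.ofReal_toReal (hΦtop p hm)]
  have hFcont : ContinuousOn F (Icc lo hi) := by
    intro p0 hp0
    have hm0 := hKsub hp0
    have hψp0 : 0 < ψ p0 := hψpos _ hm0
    have hp0pos : 0 < p0 := lt_of_lt_of_le hlo0 hp0.1
    have h1 : Tendsto Φ (𝓝[Icc lo hi] p0) (𝓝 (Φ p0)) := hΦcont p0 hp0
    have h2 : Tendsto (fun p => (Φ p).toReal) (𝓝[Icc lo hi] p0) (𝓝 ((Φ p0).toReal)) :=
      (ENNReal.tendsto_toReal (hΦtop p0 hm0)).comp h1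
    have h3 : Tendsto (fun p : ℝ => 1 / p) (𝓝[Icc lo hi] p0) (𝓝 (1 / p0)) :=
      Tendsto.div tendsto_const_nhds
        (tendsto_nhdsWithin_of_tendsto_nhds tendsto_id) hp0pos.ne'
    have h4 : Tendsto (fun p => (Φ p).toReal ^ (1 / p)) (𝓝[Icc lo hi] p0)
        (𝓝 ((Φ p0).toReal ^ (1 / p0))) := h2.rpow h3 (Or.inr (one_div_pos.2 hp0pos))
    have h5 : Tendsto ψ (𝓝[Icc lo hi] p0) (𝓝 (ψ p0)) := (hψc.mono hKsub) p0 hp0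
    have h6 : Tendsto (fun p => (Φ p).toReal ^ (1 / p) / ψ p) (𝓝[Icc lo hi] p0)
        (𝓝 ((Φ p0).toReal ^ (1 / p0) / ψ p0)) := h4.div h5 hψp0.ne'
    have h7 := (ENNReal.continuous_ofReal.continuousAt.tendsto).comp h6
    rw [ContinuousWithinAt, heq p0 hp0]
    refine Tendsto.congr' ?_ h7
    filter_upwards [eventually_mem_nhdsWithin] with p hp
    exact (heq p hp).symm
  obtain ⟨σ, hσK, hσmax⟩ :=
    isCompact_Icc.exists_isMaxOn (nonempty_Icc.2 hlohi) hFcont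
  have hσmem : σ ∈ gIoo a b := hKsub hσK
  have hFσG : F σ ≤ G := by
    rw [hGsup]
    exact le_iSup₂ (f := fun p (_ : p ∈ gIoo a b) => F p) σ hσmem
  have hGle : G ≤ max (F σ) (G / 2) := by
    rw [hGsup]
    refine iSup₂_le fun p hp => ?_
    by_cases hpK : p ∈ Icc lo hi
    · exact le_max_of_le_left (hσmax hpK)
    · exact le_max_of_le_right (le_of_lt (htail p hp hpK))
  have hFσ : F σ = G := by
    refine le_antisymm hFσG ?_
    rcases le_max_iff.1 hGle with h | h
    · exact h
    · exact absurd h (not_le.2 hεG)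
  have hσa : a < σ := hσmem.1
  have hσ1 : (1:ℝ) < σ := lt_of_le_of_lt ha hσa
  have hσ0 : (0:ℝ) < σ := lt_trans one_pos hσ1
  have hψσ : 0 < ψ σ := hψpos σ hσmem
  have hcσ0 : ENNReal.ofReal (ψ σ) ≠ 0 := (ENNReal.ofReal_pos.2 hψσ).ne'
  have hlpσ : lpNorm μ f σ = G * ENNReal.ofReal (ψ σ) := by
    calc lpNorm μ f σ
        = lpNorm μ f σ / ENNReal.ofReal (ψ σ) * ENNReal.ofReal (ψ σ) :=
          (ENNReal.div_mul_cancel hcσ0 ENNReal.ofReal_ne_top).symm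
      _ = G * ENNReal.ofReal (ψ σ) := by rw [show lpNorm μ f σ / ENNReal.ofReal (ψ σ) = F σ from rfl, hFσ]
  have hΦσtop : Φ σ ≠ ⊤ := hΦtop σ hσmem
  have hΦσ0 : Φ σ ≠ 0 := by
    intro h0
    have h1 : lpNorm μ f σ = 0 := by
      rw [hlp σ, h0, ENNReal.zero_rpow_of_pos (one_div_pos.2 hσ0)]
    rw [hlpσ] at h1
    rcases mul_eq_zero.1 h1 with h | h
    · exact hf0.ne' h
    · exact hcσ0 h
  have ht0 : 0 < conjExp σ := div_pos hσ0 (sub_pos.2 hσ1)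
  have hconj : σ.HolderConjugate (conjExp σ) := Real.HolderConjugate.conjExponent hσ1
  have hst : (σ - 1) * conjExp σ = σ := by
    rw [conjExp, mul_comm]
    exact div_mul_cancel₀ σ (sub_ne_zero.2 hσ1.ne')
  have hinv : 1 / σ + 1 / conjExp σ = 1 := by
    have : σ⁻¹ + (conjExp σ)⁻¹ = 1 := by simpa using hconj.inv_add_inv_eq_inv
    rw [one_div, one_div]
    exact this
  set g : X → ℝ := fun x => |f x| ^ (σ - 1) with hgdef
  have hgm : Measurable g := hf.abs.pow measurable_const
  have hg0 : ∀ x, 0 ≤ g x := fun x => Real.rpow_nonneg (abs_nonneg _) _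
  have hgt : (∫⁻ x, ENNReal.ofReal (|g x| ^ conjExp σ) ∂μ) = Φ σ := by
    refine lintegral_congr fun x => ?_
    rw [hgdef]
    simp only
    rw [abs_of_nonneg (Real.rpow_nonneg (abs_nonneg _) _),
      ← Real.rpow_mul (abs_nonneg (f x)), hst]
  have hlpg : lpNorm μ g (conjExp σ) = Φ σ ^ (1 / conjExp σ) := by
    unfold _root_.lpNorm
    rw [hgt]
  have hfg : ∫⁻ x, ENNReal.ofReal (f x * g x) ∂μ = Φ σ := by
    refine lintegral_congr_ae ?_
    filter_upwards [hfpos] with x hx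
    congr 1
    rcases eq_or_lt_of_le hx with h0 | h0
    · rw [hgdef]
      simp only
      rw [← h0]
      simp [Real.zero_rpow hσ0.ne']
    · have habs : |f x| = f x := abs_of_pos h0
      rw [hgdef]
      simp only
      rw [habs]
      calc f x * f x ^ (σ - 1) = f x ^ (1:ℝ) * f x ^ (σ - 1) := by rw [Real.rpow_one]
        _ = f x ^ (1 + (σ - 1)) := (Real.rpow_add h0 _ _).symm
        _ = f x ^ σ := by ring_nf
  have hbound : ∀ q ∈ gIoo a b, lpNorm μ f q ≤ G * ENNReal.ofReal (ψ q) := by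
    intro q hq
    have h1 : F q ≤ G := by
      rw [hGsup]
      exact le_iSup₂ (f := fun p (_ : p ∈ gIoo a b) => F p) q hq
    have hcq0 : ENNReal.ofReal (ψ q) ≠ 0 := (ENNReal.ofReal_pos.2 (hψpos q hq)).ne'
    calc lpNorm μ f q
        = lpNorm μ f q / ENNReal.ofReal (ψ q) * ENNReal.ofReal (ψ q) :=
          (ENNReal.div_mul_cancel hcq0 ENNReal.ofReal_ne_top).symm
      _ ≤ G * ENNReal.ofReal (ψ q) := mul_le_mul_left h1 _
  have hupper : ∫⁻ x, ENNReal.ofReal (f x * g x) ∂μ ≤ G * smallNorm μ ψ a b g := by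
    have hd : ∀ d : SLDecomp μ a b g,
        ∫⁻ x, ENNReal.ofReal (f x * g x) ∂μ ≤ G * d.cost ψ := by
      intro d
      refine le_trans (holder_GS ha hf hfpos d) ?_
      calc ∑' k, lpNorm μ f (d.q k) * lpNorm μ (d.gk k) (conjExp (d.q k))
          ≤ ∑' k, G * ENNReal.ofReal (ψ (d.q k)) * lpNorm μ (d.gk k) (conjExp (d.q k)) :=
            ENNReal.tsum_le_tsum fun k => mul_le_mul_left (hbound _ (d.mem k)) _
        _ = G * d.cost ψ := by
            unfold SLDecomp.cost
            rw [← ENNReal.tsum_mul_left]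
            exact tsum_congr fun k => mul_assoc _ _ _
    have h2 : (∫⁻ x, ENNReal.ofReal (f x * g x) ∂μ) / G ≤ smallNorm μ ψ a b g :=
      le_iInf fun d => (ENNReal.div_le_iff_le_mul (Or.inl hf0.ne') (Or.inl hfG.ne)).2
        (by rw [mul_comm]; exact hd d)
    have h3 : ∫⁻ x, ENNReal.ofReal (f x * g x) ∂μ ≤ smallNorm μ ψ a b g * G :=
      (ENNReal.div_le_iff_le_mul (Or.inl hf0.ne') (Or.inl hfG.ne)).1 h2
    rwa [mul_comm] at h3
  have hglp_pos : 0 < lpNorm μ g (conjExp σ) := by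
    rw [hlpg]
    exact ENNReal.rpow_pos (pos_iff_ne_zero.2 hΦσ0) hΦσtop
  have hglp_top : lpNorm μ g (conjExp σ) < ⊤ := by
    rw [hlpg]
    exact ENNReal.rpow_lt_top_of_nonneg (le_of_lt (one_div_pos.2 ht0)) hΦσtop
  have hlower : G * smallNorm μ ψ a b g ≤ Φ σ := by
    calc G * smallNorm μ ψ a b g
        ≤ G * (ENNReal.ofReal (ψ σ) * lpNorm μ g (conjExp σ)) :=
          mul_le_mul_right (smallNorm_le_single μ ψ hσmem hσ1 hgm) _
      _ = G * ENNReal.ofReal (ψ σ) * lpNorm μ g (conjExp σ) := (mul_assoc _ _ _).symm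
      _ = lpNorm μ f σ * lpNorm μ g (conjExp σ) := by rw [hlpσ]
      _ = Φ σ ^ (1 / σ) * Φ σ ^ (1 / conjExp σ) := by rw [hlp σ, hlpg]
      _ = Φ σ ^ (1 / σ + 1 / conjExp σ) := (ENNReal.rpow_add _ _ hΦσ0 hΦσtop).symm
      _ = Φ σ := by rw [hinv, ENNReal.rpow_one]
  refine ⟨σ, hσmem, g, hgm, hg0, hglp_pos, hglp_top, ?_⟩
  have hu2 : Φ σ ≤ G * smallNorm μ ψ a b g := by rw [← hfg]; exact hupper
  rw [hfg]
  exact le_antisymm hu2 hlower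

end
end

section
/- Let (X,Σ,μ) be a σ-finite measure space, 1 ≤ a < b ≤ ∞, and ψ : (a,b) → (0,∞) continuous. Let g : X → ℝ be measurable with ‖g‖_{SL(ψ)} < ∞, and let (E_n) be a decreasing sequence of measurable sets with lim_{n→∞} μ(E_n) = 0. Then lim_{n→∞} ‖g · 1_{E_n}‖_{SL(ψ)} = 0; that is, every element of the Bilateral Small Lebesgue space has absolutely continuous norm. -/
open MeasureTheory Filter Set
open scoped ENNReal Topology NNReal

noncomputable section

/-- Every element of the Bilateral Small Lebesgue space has absolutely continuous norm:
the `SL(ψ)`-norm of `g` restricted to a decreasing sequence of sets of measure tending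
to zero tends to zero. -/
theorem smallNorm_absolutely_continuous {X : Type*} [MeasurableSpace X] (μ : Measure X)
    [SigmaFinite μ]
    (a : ℝ) (b : ℝ≥0∞) (ha : 1 ≤ a) (hab : ENNReal.ofReal a < b)
    (ψ : ℝ → ℝ) (hψc : ContinuousOn ψ (gIoo a b)) (hψpos : ∀ p ∈ gIoo a b, 0 < ψ p)
    (g : X → ℝ) (hg : Measurable g) (hgS : smallNorm μ ψ a b g < ⊤)
    (E : ℕ → Set X) (hEm : ∀ n, MeasurableSet (E n)) (hEd : Antitone E)
    (hE0 : Tendsto (fun n => μ (E n)) atTop (𝓝 0)) :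
    Tendsto (fun n => smallNorm μ ψ a b ((E n).indicator g)) atTop (𝓝 0) := by
  -- pick a decomposition of finite cost
  obtain ⟨d, hd⟩ : ∃ d : SLDecomp μ a b g, d.cost ψ < ⊤ := by
    rw [smallNorm, iInf_lt_iff] at hgS; exact hgS
  -- basic facts about the exponents
  have hq1 : ∀ k, 1 < d.q k := fun k => lt_of_le_of_lt ha (d.mem k).1
  have hp_pos : ∀ k, 0 < conjExp (d.q k) := fun k => by
    have h1 := hq1 k
    exact div_pos (lt_trans one_pos h1) (by linarith)
  have hψk : ∀ k, 0 < ψ (d.q k) := fun k => hψpos _ (d.mem k)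
  set p : ℕ → ℝ := fun k => conjExp (d.q k) with hp
  set c : ℕ → ℝ≥0∞ := fun k => ENNReal.ofReal (ψ (d.q k)) with hc
  have hc_pos : ∀ k, 0 < c k := fun k => ENNReal.ofReal_pos.2 (hψk k)
  have hc_ne_top : ∀ k, c k ≠ ⊤ := fun k => ENNReal.ofReal_ne_top
  -- each term of the cost is finite
  set bound : ℕ → ℝ≥0∞ := fun k => c k * lpNorm μ (d.gk k) (p k) with hbound
  have hbound_sum : ∑' k, bound k ≠ ⊤ := hd.ne
  have hlp_fin : ∀ k, lpNorm μ (d.gk k) (p k) < ⊤ := fun k => by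
    have h1 : bound k < ⊤ := ENNReal.lt_top_of_tsum_ne_top hbound_sum k
    by_contra h
    push_neg at h
    rw [top_le_iff] at h
    rw [hbound] at h1
    simp only [h, ENNReal.mul_top (hc_pos k).ne'] at h1
    exact (lt_irrefl _ h1)
  -- the density functions
  set F : ℕ → X → ℝ≥0∞ := fun k x => ENNReal.ofReal (|d.gk k x| ^ p k) with hF
  have hF_meas : ∀ k, Measurable (F k) := fun k =>
    (((d.meas k).abs.pow_const _).ennreal_ofReal)
  have hF_int : ∀ k, ∫⁻ x, F k x ∂μ < ⊤ := fun k => by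
    have := hlp_fin k
    rw [_root_.lpNorm, ENNReal.rpow_lt_top_iff_of_pos (div_pos one_pos (hp_pos k))] at this
    exact this
  -- indicator of gk: pointwise identity of densities
  have hF_ind : ∀ k n x, ENNReal.ofReal (|(E n).indicator (d.gk k) x| ^ p k)
      = (E n).indicator (F k) x := by
    intro k n x
    by_cases hx : x ∈ E n
    · simp [Set.indicator_of_mem hx, hF]
    · simp [Set.indicator_of_notMem hx, Real.zero_rpow (show p k ≠ 0 from (hp_pos k).ne')]
  have hlp_ind : ∀ k n, lpNorm μ ((E n).indicator (d.gk k)) (p k)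
      = ((μ.withDensity (F k)) (E n)) ^ (1 / p k) := by
    intro k n
    rw [_root_.lpNorm, withDensity_apply _ (hEm n), ← lintegral_indicator (hEm n) (F k)]
    congr 1
    exact lintegral_congr fun x => hF_ind k n x
  -- measure of intersection is zero
  have hIcap : μ (⋂ n, E n) = 0 := by
    refine le_antisymm ?_ (zero_le)
    exact ge_of_tendsto' hE0 fun n => measure_mono (Set.iInter_subset E n)
  -- the terms
  set term : ℕ → ℕ → ℝ≥0∞ := fun n k => c k * lpNorm μ ((E n).indicator (d.gk k)) (p k)
    with hterm
  -- Step A: smallNorm of the indicator is at most the sum of the terms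
  have hA : ∀ n, smallNorm μ ψ a b ((E n).indicator g) ≤ ∑' k, term n k := by
    intro n
    have hsum : ∀ᵐ x ∂μ, HasSum (fun k => (E n).indicator (d.gk k) x) ((E n).indicator g x) := by
      filter_upwards [d.sum] with x hx
      by_cases hxE : x ∈ E n
      · simpa [Set.indicator_of_mem hxE] using hx
      · simpa [Set.indicator_of_notMem hxE] using hasSum_zero
    exact iInf_le _ (⟨fun k => (E n).indicator (d.gk k), d.q,
      fun k => (d.meas k).indicator (hEm n), d.mem, hsum⟩ : SLDecomp μ a b _)
  -- Step B: term bound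
  have hB : ∀ n k, term n k ≤ bound k := by
    intro n k
    refine mul_le_mul_right ?_ _
    rw [_root_.lpNorm, _root_.lpNorm]
    refine ENNReal.rpow_le_rpow ?_ (div_pos one_pos (hp_pos k)).le
    refine lintegral_mono fun x => ENNReal.ofReal_le_ofReal ?_
    refine Real.rpow_le_rpow (abs_nonneg _) ?_ (hp_pos k).le
    by_cases hx : x ∈ E n
    · simp [Set.indicator_of_mem hx]
    · simp [Set.indicator_of_notMem hx]
  -- Step C: each term tends to zero
  have hC : ∀ k, Tendsto (fun n => term n k) atTop (𝓝 0) := by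
    intro k
    set ν : Measure X := μ.withDensity (F k) with hν
    have hνac : ν ≪ μ := withDensity_absolutelyContinuous μ (F k)
    have hνcap : ν (⋂ n, E n) = 0 := hνac hIcap
    have hνfin : ∃ i, ν (E i) ≠ ⊤ := ⟨0, by
      refine ne_of_lt (lt_of_le_of_lt (measure_mono (Set.subset_univ _)) ?_)
      rw [hν, withDensity_apply _ MeasurableSet.univ, Measure.restrict_univ]
      exact hF_int k⟩
    have htend : Tendsto (fun n => ν (E n)) atTop (𝓝 0) := by
      have := tendsto_measure_iInter_atTop (μ := ν)
        (fun n => (hEm n).nullMeasurableSet) hEd hνfin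
      rwa [hνcap] at this
    have h2 : Tendsto (fun n => (ν (E n)) ^ (1 / p k)) atTop (𝓝 0) := by
      have := htend.ennrpow_const (1 / p k)
      rwa [ENNReal.zero_rpow_of_pos (div_pos one_pos (hp_pos k))] at this
    have h3 : Tendsto (fun n => c k * (ν (E n)) ^ (1 / p k)) atTop (𝓝 (c k * 0)) :=
      ENNReal.Tendsto.const_mul h2 (Or.inr (hc_ne_top k))
    rw [mul_zero] at h3
    simp only [hterm]
    convert h3 using 2 with n
    rw [hlp_ind k n]
  -- Step D: dominated convergence for the sums
  have hD : Tendsto (fun n => ∑' k, term n k) atTop (𝓝 0) := by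
    have hcount : ∀ n, ∑' k, term n k = ∫⁻ k, term n k ∂(Measure.count) := fun n =>
      (lintegral_count _).symm
    have hboundint : ∫⁻ k, bound k ∂(Measure.count) ≠ ⊤ := by
      rw [lintegral_count]; exact hbound_sum
    have := tendsto_lintegral_of_dominated_convergence (μ := Measure.count)
      (F := fun n k => term n k) (f := fun _ => 0) bound
      (fun n => measurable_of_countable _)
      (fun n => Eventually.of_forall (hB n)) hboundint
      (Eventually.of_forall hC)
    simp only [lintegral_zero] at this
    simp only [hcount]
    exact this
  -- conclude by squeezing
  exact tendsto_of_tendsto_of_tendsto_of_le_of_le (g := fun _ => 0)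
    tendsto_const_nhds hD (fun n => zero_le) hA

end
end

section
/- Let (X,Σ,μ) be a σ-finite nonatomic measure space, 1 ≤ a < b ≤ ∞, and let ψ : (a,b) → (0,∞) be continuous with inf_{p∈(a,b)} ψ(p) > 0 and with lim_{p→a+} ψ(p) = ∞ or lim_{p→b−} ψ(p) = ∞. Then for every A ∈ Σ with 0 < μ(A) < ∞, ‖1_A‖_{SL(ψ)} = μ(A) / ( sup_{p∈(a,b)} μ(A)^{1/p}/ψ(p) ); i.e. the fundamental function of SL(ψ) equals δ/φ(G(ψ),δ). -/
open MeasureTheory Filter Set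
open scoped ENNReal Topology NNReal

noncomputable section

lemma lpNorm_zero' {X : Type*} [MeasurableSpace X] (μ : Measure X) {r : ℝ} (hr : 0 < r) :
    lpNorm μ (0 : X → ℝ) r = 0 := by
  unfold _root_.lpNorm
  have h0 : (fun x : X => ENNReal.ofReal (|(0 : X → ℝ) x| ^ r)) = fun _ => 0 := by
    funext x; simp [Real.zero_rpow hr.ne']
  rw [h0, lintegral_zero]
  exact ENNReal.zero_rpow_of_pos (one_div_pos.2 hr)

lemma lpNorm_indicator_one' {X : Type*} [MeasurableSpace X] (μ : Measure X) {A : Set X}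
    (hA : MeasurableSet A) {r : ℝ} (hr : 0 < r) :
    lpNorm μ (A.indicator fun _ => (1 : ℝ)) r = μ A ^ (1 / r) := by
  unfold _root_.lpNorm
  congr 1
  have hfun : (fun x => ENNReal.ofReal (|(A.indicator fun _ => (1:ℝ)) x| ^ r)) =
      A.indicator (1 : X → ℝ≥0∞) := by
    funext x
    by_cases hx : x ∈ A <;>
      simp [Set.indicator_of_mem, Set.indicator_of_notMem, hx, Real.zero_rpow hr.ne']
  rw [hfun, lintegral_indicator_one hA]

/-- The trivial one-term decomposition of an indicator. -/
def trivDecomp {X : Type*} [MeasurableSpace X] (μ : Measure X) {a : ℝ} {b : ℝ≥0∞}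
    (A : Set X) (hA : MeasurableSet A) {p : ℝ} (hp : p ∈ gIoo a b) :
    SLDecomp μ a b (A.indicator fun _ => (1 : ℝ)) where
  gk k := if k = 0 then (A.indicator fun _ => (1:ℝ)) else 0
  q _ := p
  meas k := by
    by_cases hk : k = 0
    · simpa [hk] using (measurable_const.indicator hA :
        Measurable (A.indicator fun _ => (1:ℝ)))
    · simp only [if_neg hk]
      exact measurable_zero
  mem _ := hp
  sum := Filter.Eventually.of_forall fun x => by
    simpa using hasSum_single
      (f := fun k : ℕ => (if k = 0 then (A.indicator fun _ => (1:ℝ)) else 0) x) 0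
      (fun b' hb' => by simp [hb'])

lemma trivDecomp_cost {X : Type*} [MeasurableSpace X] (μ : Measure X) {a : ℝ} {b : ℝ≥0∞}
    (A : Set X) (hA : MeasurableSet A) {p : ℝ} (hp : p ∈ gIoo a b) (hp1 : 1 < p) (ψ : ℝ → ℝ) :
    (trivDecomp μ A hA hp).cost ψ = ENNReal.ofReal (ψ p) * μ A ^ (1 - 1/p) := by
  have hcp : 0 < conjExp p := by
    unfold conjExp
    have : (0:ℝ) < p - 1 := by linarith
    positivity
  unfold SLDecomp.cost
  rw [tsum_eq_single 0]
  · have h1r : 1 / conjExp p = 1 - 1/p := by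
      unfold conjExp
      field_simp
    simp [trivDecomp, lpNorm_indicator_one' μ hA hcp, h1r]
  · intro b' hb'
    simp [trivDecomp, if_neg hb', lpNorm_zero' μ hcp]

/-- The fundamental function of the Small Lebesgue space: for any measurable `A` with
`0 < μ(A) < ∞`, `‖1_A‖_{SL(ψ)} = μ(A)/φ(G(ψ), μ(A))`. -/
theorem smallNorm_indicator {X : Type*} [MeasurableSpace X] (μ : Measure X)
    [SigmaFinite μ] (hμ : IsNonatomic μ)
    (a : ℝ) (b : ℝ≥0∞) (ha : 1 ≤ a) (hab : ENNReal.ofReal a < b)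
    (ψ : ℝ → ℝ) (hψc : ContinuousOn ψ (gIoo a b))
    (hψinf : ∃ c : ℝ, 0 < c ∧ ∀ p ∈ gIoo a b, c ≤ ψ p)
    (hψblow : Tendsto ψ (𝓝[>] a) atTop ∨ Tendsto ψ (rightEndFilter b) atTop)
    (A : Set X) (hA : MeasurableSet A) (hA0 : 0 < μ A) (hAfin : μ A < ⊤) :
    smallNorm μ ψ a b (A.indicator fun _ => (1 : ℝ)) =
      μ A / ⨆ p ∈ gIoo a b, μ A ^ (1 / p) / ENNReal.ofReal (ψ p) := by
  obtain ⟨c, hc, hcψ⟩ := hψinf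
  set S : ℝ≥0∞ := ⨆ p ∈ gIoo a b, μ A ^ (1 / p) / ENNReal.ofReal (ψ p) with hSdef
  have hA0' : μ A ≠ 0 := hA0.ne'
  have hAtop : μ A ≠ ⊤ := hAfin.ne
  have hp1 : ∀ p ∈ gIoo a b, 1 < p := fun p hp => lt_of_le_of_lt ha hp.1
  have hψpos : ∀ p ∈ gIoo a b, (0:ℝ≥0∞) < ENNReal.ofReal (ψ p) := fun p hp =>
    ENNReal.ofReal_pos.2 (lt_of_lt_of_le hc (hcψ p hp))
  have hψtop : ∀ p : ℝ, ENNReal.ofReal (ψ p) ≠ ⊤ := fun p => ENNReal.ofReal_ne_top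
  have hrpow_pos : ∀ r : ℝ, 0 < μ A ^ r := fun r => ENNReal.rpow_pos hA0 hAtop
  -- gIoo is nonempty
  obtain ⟨p₀, hp₀⟩ : ∃ p, p ∈ gIoo a b := by
    rcases eq_or_ne b ⊤ with hb | hb
    · exact ⟨a + 1, ⟨by linarith, by simp [hb]⟩⟩
    · have hb' : a < b.toReal := (ENNReal.ofReal_lt_iff_lt_toReal (by linarith) hb).1 hab
      refine ⟨(a + b.toReal) / 2, ⟨by linarith, ?_⟩⟩
      calc ENNReal.ofReal ((a + b.toReal) / 2) < ENNReal.ofReal b.toReal :=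
            (ENNReal.ofReal_lt_ofReal_iff_of_nonneg (by linarith)).2 (by linarith)
        _ = b := ENNReal.ofReal_toReal hb
  -- S ≠ 0
  have hS0 : S ≠ 0 := by
    have h1 : μ A ^ (1 / p₀) / ENNReal.ofReal (ψ p₀) ≤ S := by
      rw [hSdef]
      exact le_iSup₂ (f := fun p (_ : p ∈ gIoo a b) => μ A ^ (1/p) / ENNReal.ofReal (ψ p)) p₀ hp₀
    have h2 : (0:ℝ≥0∞) < μ A ^ (1 / p₀) / ENNReal.ofReal (ψ p₀) :=
      ENNReal.div_pos (hrpow_pos _).ne' (hψtop p₀)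
    exact (lt_of_lt_of_le h2 h1).ne'
  -- S ≠ ⊤
  have hStop : S ≠ ⊤ := by
    have hb : S ≤ (max 1 (μ A)) / ENNReal.ofReal c := by
      rw [hSdef]
      refine iSup₂_le fun p hp => ?_
      refine ENNReal.div_le_div ?_ (ENNReal.ofReal_le_ofReal (hcψ p hp))
      have hp0 : (0:ℝ) < p := lt_trans one_pos (hp1 p hp)
      rcases le_total (μ A) 1 with h | h
      · exact le_trans (ENNReal.rpow_le_one h (by positivity)) (le_max_left _ _)
      · refine le_trans ?_ (le_max_right _ _)
        have h1p : 1 / p ≤ 1 := by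
          rw [div_le_one hp0]
          linarith [hp1 p hp]
        calc μ A ^ (1/p) ≤ μ A ^ (1:ℝ) := ENNReal.rpow_le_rpow_of_exponent_le h h1p
          _ = μ A := ENNReal.rpow_one _
    exact ne_top_of_le_ne_top
      (ENNReal.div_lt_top (by simp [hAtop]) (ENNReal.ofReal_pos.2 hc).ne').ne hb
  -- upper bound via trivial decompositions
  have key1 : ∀ p ∈ gIoo a b,
      smallNorm μ ψ a b (A.indicator fun _ => (1:ℝ)) ≤
        ENNReal.ofReal (ψ p) * μ A ^ (1 - 1/p) := by
    intro p hp
    calc smallNorm μ ψ a b (A.indicator fun _ => (1:ℝ)) ≤ (trivDecomp μ A hA hp).cost ψ :=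
          iInf_le _ _
      _ = _ := trivDecomp_cost μ A hA hp (hp1 p hp) ψ
  -- lower bound: every decomposition
  have key2 : ∀ d : SLDecomp μ a b (A.indicator fun _ => (1:ℝ)), μ A ≤ d.cost ψ * S := by
    intro d
    have hmeas : ∀ k, AEMeasurable (fun x => ENNReal.ofReal |d.gk k x|) (μ.restrict A) :=
      fun k => ((d.meas k).abs.ennreal_ofReal).aemeasurable
    have h1 : μ A ≤ ∑' k, ∫⁻ x in A, ENNReal.ofReal |d.gk k x| ∂μ := by
      rw [← lintegral_tsum hmeas, ← setLIntegral_one A]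
      refine lintegral_mono_ae ?_
      rw [ae_restrict_iff' hA]
      filter_upwards [d.sum] with x hx hxA
      have hx1 : HasSum (fun k => d.gk k x) 1 := by
        simpa [Set.indicator_of_mem hxA] using hx
      have hs : Summable fun k => d.gk k x := hx1.summable
      have habs : Summable fun k => |d.gk k x| := hs.abs
      have hle : (1:ℝ) ≤ ∑' k, |d.gk k x| :=
        calc (1:ℝ) = ∑' k, d.gk k x := hx1.tsum_eq.symm
          _ ≤ ∑' k, |d.gk k x| := Summable.tsum_le_tsum (fun k => le_abs_self _) hs habs
      calc (1:ℝ≥0∞) = ENNReal.ofReal 1 := by simp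
        _ ≤ ENNReal.ofReal (∑' k, |d.gk k x|) := ENNReal.ofReal_le_ofReal hle
        _ = ∑' k, ENNReal.ofReal |d.gk k x| :=
            ENNReal.ofReal_tsum_of_nonneg (fun k => abs_nonneg _) habs
    have h2 : ∀ k, ∫⁻ x in A, ENNReal.ofReal |d.gk k x| ∂μ ≤
        (ENNReal.ofReal (ψ (d.q k)) * lpNorm μ (d.gk k) (conjExp (d.q k))) * S := by
      intro k
      set q := d.q k with hq
      have hqm := d.mem k
      have hq1 : 1 < q := hp1 q hqm
      have hconj : (conjExp q).HolderConjugate q := (Real.HolderConjugate.conjExponent hq1).symm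
      set F : X → ℝ≥0∞ := fun x => ENNReal.ofReal |d.gk k x| with hF
      set G : X → ℝ≥0∞ := A.indicator 1 with hG
      have hH := ENNReal.lintegral_mul_le_Lp_mul_Lq μ hconj (f := F) (g := G)
        ((d.meas k).abs.ennreal_ofReal).aemeasurable
        (measurable_one.indicator hA).aemeasurable
      have hLHS : ∫⁻ x, (F * G) x ∂μ = ∫⁻ x in A, F x ∂μ := by
        rw [← lintegral_indicator hA]
        refine lintegral_congr fun x => ?_
        by_cases hx : x ∈ A <;>
          simp [hG, Pi.mul_apply, Set.indicator_of_mem, Set.indicator_of_notMem, hx]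
      have hf : (∫⁻ x, F x ^ conjExp q ∂μ) ^ (1/conjExp q) = lpNorm μ (d.gk k) (conjExp q) := by
        unfold _root_.lpNorm
        congr 1
        refine lintegral_congr fun x => ?_
        rw [hF]
        rw [ENNReal.ofReal_rpow_of_nonneg (abs_nonneg _) hconj.nonneg]
      have hg : (∫⁻ x, G x ^ q ∂μ) ^ (1/q) = μ A ^ (1/q) := by
        congr 1
        have hfun : (fun x => G x ^ q) = A.indicator 1 := by
          funext x
          by_cases hx : x ∈ A <;>
            simp [hG, Set.indicator_of_mem, Set.indicator_of_notMem, hx,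
              ENNReal.zero_rpow_of_pos (by linarith : (0:ℝ) < q)]
        rw [show (fun x => G x ^ q) = fun x => (fun x => G x ^ q) x from rfl, hfun,
          lintegral_indicator_one hA]
      have hμq : μ A ^ (1/q) ≤ S * ENNReal.ofReal (ψ q) := by
        have hterm : μ A ^ (1/q) / ENNReal.ofReal (ψ q) ≤ S := by
          rw [hSdef]
          exact le_iSup₂ (f := fun p (_ : p ∈ gIoo a b) =>
            μ A ^ (1/p) / ENNReal.ofReal (ψ p)) q hqm
        exact (ENNReal.div_le_iff_le_mul (Or.inl (hψpos q hqm).ne') (Or.inl (hψtop q))).1 hterm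
      calc ∫⁻ x in A, ENNReal.ofReal |d.gk k x| ∂μ
          ≤ lpNorm μ (d.gk k) (conjExp q) * μ A ^ (1/q) := by
            rw [← hLHS, ← hf, ← hg]; exact hH
        _ ≤ lpNorm μ (d.gk k) (conjExp q) * (S * ENNReal.ofReal (ψ q)) :=
            mul_le_mul_right hμq _
        _ = (ENNReal.ofReal (ψ q) * lpNorm μ (d.gk k) (conjExp q)) * S := by
            rw [mul_comm S, ← mul_assoc, mul_comm (lpNorm μ (d.gk k) (conjExp q))]
    calc μ A ≤ ∑' k, ∫⁻ x in A, ENNReal.ofReal |d.gk k x| ∂μ := h1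
      _ ≤ ∑' k, (ENNReal.ofReal (ψ (d.q k)) * lpNorm μ (d.gk k) (conjExp (d.q k))) * S :=
          ENNReal.tsum_le_tsum h2
      _ = d.cost ψ * S := by rw [ENNReal.tsum_mul_right]; rfl
  have hne : Nonempty (SLDecomp μ a b (A.indicator fun _ => (1:ℝ))) :=
    ⟨trivDecomp μ A hA hp₀⟩
  refine le_antisymm ?_ ?_
  · rw [ENNReal.le_div_iff_mul_le (Or.inl hS0) (Or.inl hStop), hSdef, ENNReal.mul_iSup]
    refine iSup_le fun p => ?_
    rw [ENNReal.mul_iSup]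
    refine iSup_le fun hp => ?_
    calc smallNorm μ ψ a b (A.indicator fun _ => (1:ℝ)) *
          (μ A ^ (1/p) / ENNReal.ofReal (ψ p))
        ≤ (ENNReal.ofReal (ψ p) * μ A ^ (1 - 1/p)) *
          (μ A ^ (1/p) / ENNReal.ofReal (ψ p)) := mul_le_mul_left (key1 p hp) _
      _ = (ENNReal.ofReal (ψ p) * (ENNReal.ofReal (ψ p))⁻¹) *
          (μ A ^ (1 - 1/p) * μ A ^ (1/p)) := by
          rw [ENNReal.div_eq_inv_mul, mul_mul_mul_comm]
      _ = μ A := by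
          rw [ENNReal.mul_inv_cancel (hψpos p hp).ne' (hψtop p), one_mul,
            ← ENNReal.rpow_add _ _ hA0' hAtop]
          norm_num
  · rw [ENNReal.div_le_iff_le_mul (Or.inl hS0) (Or.inl hStop)]
    unfold smallNorm
    rw [ENNReal.iInf_mul (fun h _ => absurd h hStop)]
    exact le_iInf key2


end
end

section
/- Let 1 ≤ a < b < ∞ and α, β > 0. Then, as δ → 0+, sup_{p∈(a,b)} δ^{1/p} · min((p−a)^α, (b−p)^β) is asymptotically equivalent to (β b²/e)^β · δ^{1/b} · |log δ|^{−β}; that is, the ratio of these two quantities tends to 1 as δ → 0+. -/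
open Filter Set
open scoped Topology

/-- `sup_{t>0} e^{-ct} t^β = (β/(ce))^β`. -/
private lemma gn_exp_bound {β t c : ℝ} (hβ : 0 < β) (ht : 0 < t) (hc : 0 < c) :
    Real.exp (-(c * t)) * t ^ β ≤ (β / (c * Real.exp 1)) ^ β := by
  have hct : 0 < c * t := mul_pos hc ht
  have h1 : c * t / β ≤ Real.exp (c * t / β - 1) := by
    have := Real.add_one_le_exp (c * t / β - 1); linarith
  have h2 : (c * t / β) ^ β ≤ Real.exp (c * t - β) := by
    calc (c * t / β) ^ β ≤ Real.exp (c * t / β - 1) ^ β :=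
          Real.rpow_le_rpow (by positivity) h1 hβ.le
      _ = Real.exp ((c * t / β - 1) * β) := by rw [← Real.exp_mul]
      _ = Real.exp (c * t - β) := by congr 1; field_simp
  have h3 : t ^ β = (c * t / β) ^ β * (β / c) ^ β := by
    rw [← Real.mul_rpow (by positivity) (by positivity)]
    congr 1
    field_simp
  have he : β / (c * Real.exp 1) = (β / c) * Real.exp (-1) := by
    rw [Real.exp_neg]
    field_simp
  calc Real.exp (-(c * t)) * t ^ β
      = Real.exp (-(c * t)) * ((c * t / β) ^ β * (β / c) ^ β) := by rw [h3]
    _ ≤ Real.exp (-(c * t)) * (Real.exp (c * t - β) * (β / c) ^ β) := by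
        exact mul_le_mul_of_nonneg_left
          (mul_le_mul_of_nonneg_right h2 (by positivity)) (Real.exp_pos _).le
    _ = Real.exp (-β) * (β / c) ^ β := by
        rw [← mul_assoc, ← Real.exp_add]; congr 2; ring
    _ = (β / (c * Real.exp 1)) ^ β := by
        rw [he, Real.mul_rpow (by positivity) (Real.exp_pos _).le, ← Real.exp_mul]
        rw [mul_comm]; congr 1; ring

set_option maxHeartbeats 1000000 in
/-- Asymptotics of the fundamental function of `G(a,b;α,β)` as `δ → 0+`:
`sup_{p∈(a,b)} δ^{1/p} min((p-a)^α, (b-p)^β) ∼ (βb²/e)^β δ^{1/b} |log δ|^{-β}`. -/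
theorem fund_asymptotics_zero (a b α β : ℝ) (ha : 1 ≤ a) (hab : a < b)
    (hα : 0 < α) (hβ : 0 < β) :
    Tendsto (fun δ : ℝ =>
        sSup ((fun p : ℝ => δ ^ (1 / p) * min ((p - a) ^ α) ((b - p) ^ β)) '' Set.Ioo a b) /
          ((β * b ^ 2 / Real.exp 1) ^ β * δ ^ (1 / b) * |Real.log δ| ^ (-β)))
      (𝓝[>] 0) (𝓝 1) := by
  have hb1 : 1 < b := lt_of_le_of_lt ha hab
  have hb0 : 0 < b := by linarith
  have ha0 : 0 < a := by linarith
  have hba : 0 < b - a := by linarith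
  have hCpos : 0 < (β * b ^ 2 / Real.exp 1) ^ β := Real.rpow_pos_of_pos (by positivity) β
  set c : ℝ := min ((b - a) / 2) (((b - a) / 2) ^ (α / β)) with hcdef
  have hcpos : 0 < c := lt_min (by linarith) (Real.rpow_pos_of_pos (by linarith) _)
  have hcba : c ≤ (b - a) / 2 := min_le_left _ _
  clear_value c
  have hlog : Tendsto (fun δ : ℝ => -Real.log δ) (𝓝[>] 0) atTop :=
    tendsto_neg_atBot_atTop.comp Real.tendsto_log_nhdsGT_zero
  -- the lower comparison function
  have hg : Tendsto (fun δ : ℝ => Real.exp (β * (1 - b / (b - β * b ^ 2 / (-Real.log δ)))))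
      (𝓝[>] 0) (𝓝 1) := by
    have h1 : Tendsto (fun δ : ℝ => β * b ^ 2 / (-Real.log δ)) (𝓝[>] 0) (𝓝 0) :=
      Tendsto.div_atTop tendsto_const_nhds hlog
    have h2 : Tendsto (fun δ : ℝ => b - β * b ^ 2 / (-Real.log δ)) (𝓝[>] 0) (𝓝 b) := by
      simpa using (tendsto_const_nhds (x := b)).sub h1
    have h4 : Tendsto (fun δ : ℝ => b / (b - β * b ^ 2 / (-Real.log δ))) (𝓝[>] 0) (𝓝 1) := by
      have := Tendsto.div (tendsto_const_nhds (x := b)) h2 hb0.ne'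
      rw [div_self hb0.ne'] at this; exact this
    have h5 : Tendsto (fun δ : ℝ => β * (1 - b / (b - β * b ^ 2 / (-Real.log δ))))
        (𝓝[>] 0) (𝓝 0) := by
      have h6 := ((tendsto_const_nhds (x := (1:ℝ))).sub h4).const_mul β
      simpa using h6
    have := (Real.continuous_exp.tendsto 0).comp h5
    simpa [Function.comp_def] using this
  have key : ∀ᶠ δ in 𝓝[>] (0:ℝ),
      Real.exp (β * (1 - b / (b - β * b ^ 2 / (-Real.log δ)))) ≤
        sSup ((fun p : ℝ => δ ^ (1 / p) * min ((p - a) ^ α) ((b - p) ^ β)) '' Set.Ioo a b) /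
          ((β * b ^ 2 / Real.exp 1) ^ β * δ ^ (1 / b) * |Real.log δ| ^ (-β)) ∧
      sSup ((fun p : ℝ => δ ^ (1 / p) * min ((p - a) ^ α) ((b - p) ^ β)) '' Set.Ioo a b) /
          ((β * b ^ 2 / Real.exp 1) ^ β * δ ^ (1 / b) * |Real.log δ| ^ (-β)) ≤ 1 := by
    filter_upwards [self_mem_nhdsWithin, hlog.eventually_gt_atTop (max 1 (β * b ^ 2 / c))]
      with δ hδ hL
    have hδpos : 0 < δ := hδ
    set L : ℝ := -Real.log δ with hLdef
    have hL1 : 1 < L := lt_of_le_of_lt (le_max_left _ _) hL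
    have hLc : β * b ^ 2 / c < L := lt_of_le_of_lt (le_max_right _ _) hL
    have hL0 : 0 < L := by linarith
    have hlogδ : Real.log δ = -L := by rw [hLdef]; ring
    have hlogneg : Real.log δ < 0 := by rw [hlogδ]; linarith
    clear_value L
    set t : ℝ := β * b ^ 2 / L with htdef
    have ht0 : 0 < t := by rw [htdef]; positivity
    have htc : t < c := by
      rw [htdef, div_lt_iff₀ hL0]
      have := (div_lt_iff₀ hcpos).mp hLc
      nlinarith
    clear_value t
    set p : ℝ := b - t with hpdef
    have hpb : p < b := by rw [hpdef]; linarith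
    have hap : a < p := by rw [hpdef]; linarith
    have hp0 : 0 < p := lt_trans ha0 hap
    clear_value p
    -- min condition at p
    have hmin : t ^ β ≤ (p - a) ^ α := by
      have h1 : t ^ β ≤ ((b - a) / 2) ^ α := by
        calc t ^ β ≤ (((b - a) / 2) ^ (α / β)) ^ β :=
              Real.rpow_le_rpow ht0.le (le_trans htc.le (by rw [hcdef]; exact min_le_right _ _))
                hβ.le
          _ = ((b - a) / 2) ^ α := by
              rw [← Real.rpow_mul (by linarith), div_mul_cancel₀ _ hβ.ne']
      have h2 : ((b - a) / 2) ^ α ≤ (p - a) ^ α :=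
        Real.rpow_le_rpow (by linarith) (by rw [hpdef]; linarith) hα.le
      linarith
    -- the denominator
    have hδb : δ ^ (1 / b : ℝ) = Real.exp (-(L / b)) := by
      rw [Real.rpow_def_of_pos hδpos, hlogδ]; congr 1; ring
    have habs : |Real.log δ| = L := by rw [abs_of_neg hlogneg, hLdef]
    have hD : (β * b ^ 2 / Real.exp 1) ^ β * δ ^ (1 / b) * |Real.log δ| ^ (-β) =
        (β * b ^ 2 / Real.exp 1) ^ β * Real.exp (-(L / b)) * L ^ (-β) := by
      rw [hδb, habs]
    have hDpos : 0 < (β * b ^ 2 / Real.exp 1) ^ β * Real.exp (-(L / b)) * L ^ (-β) :=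
      mul_pos (mul_pos hCpos (Real.exp_pos _)) (Real.rpow_pos_of_pos hL0 _)
    -- upper bound for every point of the image
    have hub : ∀ q ∈ Set.Ioo a b, δ ^ (1 / q) * min ((q - a) ^ α) ((b - q) ^ β) ≤
        (β * b ^ 2 / Real.exp 1) ^ β * Real.exp (-(L / b)) * L ^ (-β) := by
      intro q hq
      obtain ⟨haq, hqb⟩ := hq
      have hq0 : 0 < q := lt_trans ha0 haq
      have hδq : δ ^ (1 / q : ℝ) = Real.exp (-(L / q)) := by
        rw [Real.rpow_def_of_pos hδpos, hlogδ]; congr 1; ring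
      have hkey2 : L / b + L / b ^ 2 * (b - q) ≤ L / q := by
        have h : L / b + L / b ^ 2 * (b - q) = L * (q * (2 * b - q)) / (q * b ^ 2) := by
          field_simp; ring
        have h' : L / q = L * (b ^ 2) / (q * b ^ 2) := by
          field_simp
        rw [h, h', div_le_div_iff₀ (by positivity) (by positivity)]
        nlinarith [mul_nonneg (mul_nonneg hL0.le (mul_pos hq0 (pow_pos hb0 2)).le)
          (sq_nonneg (b - q))]
      have step2 : Real.exp (-(L / q)) ≤
          Real.exp (-(L / b)) * Real.exp (-(L / b ^ 2 * (b - q))) := by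
        rw [← Real.exp_add, Real.exp_le_exp]
        linarith
      have step3 : Real.exp (-(L / b ^ 2 * (b - q))) * (b - q) ^ β ≤
          (β / (L / b ^ 2 * Real.exp 1)) ^ β :=
        gn_exp_bound hβ (by linarith : (0:ℝ) < b - q) (by positivity)
      have step4 : (β / (L / b ^ 2 * Real.exp 1)) ^ β =
          (β * b ^ 2 / Real.exp 1) ^ β * L ^ (-β) := by
        have harg : β / (L / b ^ 2 * Real.exp 1) = (β * b ^ 2 / Real.exp 1) * L⁻¹ := by
          field_simp
        rw [harg, Real.mul_rpow (by positivity) (by positivity),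
          Real.inv_rpow hL0.le, Real.rpow_neg hL0.le]
      calc δ ^ (1 / q) * min ((q - a) ^ α) ((b - q) ^ β)
          ≤ δ ^ (1 / q) * (b - q) ^ β :=
            mul_le_mul_of_nonneg_left (min_le_right _ _) (Real.rpow_nonneg hδpos.le _)
        _ = Real.exp (-(L / q)) * (b - q) ^ β := by rw [hδq]
        _ ≤ (Real.exp (-(L / b)) * Real.exp (-(L / b ^ 2 * (b - q)))) * (b - q) ^ β := by
            apply mul_le_mul_of_nonneg_right step2 (Real.rpow_nonneg (by linarith) _)
        _ = Real.exp (-(L / b)) * (Real.exp (-(L / b ^ 2 * (b - q))) * (b - q) ^ β) := by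
            ring
        _ ≤ Real.exp (-(L / b)) * (β / (L / b ^ 2 * Real.exp 1)) ^ β :=
            mul_le_mul_of_nonneg_left step3 (Real.exp_pos _).le
        _ = (β * b ^ 2 / Real.exp 1) ^ β * Real.exp (-(L / b)) * L ^ (-β) := by
            rw [step4]; ring
    have hSle : sSup ((fun p : ℝ => δ ^ (1 / p) * min ((p - a) ^ α) ((b - p) ^ β))
        '' Set.Ioo a b) ≤ (β * b ^ 2 / Real.exp 1) ^ β * Real.exp (-(L / b)) * L ^ (-β) := by
      apply Real.sSup_le _ hDpos.le
      rintro x ⟨q, hq, rfl⟩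
      exact hub q hq
    have hBdd : BddAbove ((fun p : ℝ => δ ^ (1 / p) * min ((p - a) ^ α) ((b - p) ^ β))
        '' Set.Ioo a b) := by
      refine ⟨(β * b ^ 2 / Real.exp 1) ^ β * Real.exp (-(L / b)) * L ^ (-β), ?_⟩
      rintro x ⟨q, hq, rfl⟩
      exact hub q hq
    have hmem : δ ^ (1 / p) * min ((p - a) ^ α) ((b - p) ^ β) ∈
        ((fun p : ℝ => δ ^ (1 / p) * min ((p - a) ^ α) ((b - p) ^ β)) '' Set.Ioo a b) :=
      ⟨p, ⟨hap, hpb⟩, rfl⟩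
    -- exact value at p
    have htC : t ^ β = (β * b ^ 2 / Real.exp 1) ^ β * Real.exp β * L ^ (-β) := by
      have harg : t = (β * b ^ 2 / Real.exp 1) * (Real.exp 1 / L) := by
        rw [htdef]; field_simp
      rw [harg, Real.mul_rpow (by positivity) (by positivity),
        Real.div_rpow (Real.exp_pos 1).le hL0.le, Real.exp_one_rpow,
        Real.rpow_neg hL0.le]
      ring
    have hvalue : δ ^ (1 / p) * min ((p - a) ^ α) ((b - p) ^ β) =
        Real.exp (β * (1 - b / p)) *
          ((β * b ^ 2 / Real.exp 1) ^ β * Real.exp (-(L / b)) * L ^ (-β)) := by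
      have hbp : b - p = t := by rw [hpdef]; ring
      rw [hbp, min_eq_right hmin, Real.rpow_def_of_pos hδpos, hlogδ, htC]
      have hLt : L * t = β * b ^ 2 := by rw [htdef]; field_simp
      have hLp : L * p = L * b - β * b ^ 2 := by rw [hpdef, mul_sub, hLt]
      have hexp : Real.exp (-L * (1 / p)) * Real.exp β =
          Real.exp (β * (1 - b / p)) * Real.exp (-(L / b)) := by
        rw [← Real.exp_add, ← Real.exp_add, Real.exp_eq_exp]
        field_simp
        nlinarith [hLp]
      calc Real.exp (-L * (1 / p)) *
            ((β * b ^ 2 / Real.exp 1) ^ β * Real.exp β * L ^ (-β))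
          = (Real.exp (-L * (1 / p)) * Real.exp β) *
              ((β * b ^ 2 / Real.exp 1) ^ β * L ^ (-β)) := by ring
        _ = (Real.exp (β * (1 - b / p)) * Real.exp (-(L / b))) *
              ((β * b ^ 2 / Real.exp 1) ^ β * L ^ (-β)) := by rw [hexp]
        _ = Real.exp (β * (1 - b / p)) *
              ((β * b ^ 2 / Real.exp 1) ^ β * Real.exp (-(L / b)) * L ^ (-β)) := by ring
    have hlow : Real.exp (β * (1 - b / p)) *
        ((β * b ^ 2 / Real.exp 1) ^ β * Real.exp (-(L / b)) * L ^ (-β)) ≤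
        sSup ((fun p : ℝ => δ ^ (1 / p) * min ((p - a) ^ α) ((b - p) ^ β))
          '' Set.Ioo a b) := by
      have h := le_csSup hBdd hmem
      rw [hvalue] at h
      exact h
    rw [hD]
    constructor
    · rw [le_div_iff₀ hDpos]
      exact hlow
    · rw [div_le_one hDpos]
      exact hSle
  exact tendsto_of_tendsto_of_tendsto_of_le_of_le' hg tendsto_const_nhds
    (key.mono fun δ h => h.1) (key.mono fun δ h => h.2)
end

section
/- Let 1 ≤ a < b < ∞ and α, β > 0. Then, as δ → ∞, sup_{p∈(a,b)} δ^{1/p} · min((p−a)^α, (b−p)^β) is asymptotically equivalent to (a² α/e)^α · δ^{1/a} · (log δ)^{−α}; that is, the ratio of these two quantities tends to 1 as δ → ∞. -/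
open Filter Set
open scoped Topology

lemma rpow_mul_exp_le {α c t : ℝ} (hα : 0 < α) (hc : 0 < c) (ht : 0 < t) :
    t ^ α * Real.exp (-(c * t)) ≤ (α / c) ^ α * Real.exp (-α) := by
  have h1 : Real.log (c * t / α) ≤ c * t / α - 1 := Real.log_le_sub_one_of_pos (by positivity)
  have h2 : Real.log (c * t / α) = Real.log t - Real.log (α / c) := by
    rw [Real.log_div (by positivity) hα.ne', Real.log_mul hc.ne' ht.ne',
      Real.log_div hα.ne' hc.ne']
    ring
  have hkey : α * Real.log t - c * t ≤ α * Real.log (α / c) - α := by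
    have := mul_le_mul_of_nonneg_left h1 hα.le
    rw [h2] at this
    have hct : α * (c * t / α) = c * t := by field_simp
    nlinarith
  have e1 : t ^ α * Real.exp (-(c * t)) = Real.exp (α * Real.log t - c * t) := by
    rw [Real.rpow_def_of_pos ht, ← Real.exp_add]
    ring_nf
  have e2 : (α / c) ^ α * Real.exp (-α) = Real.exp (α * Real.log (α / c) - α) := by
    rw [Real.rpow_def_of_pos (by positivity), ← Real.exp_add]
    ring_nf
  rw [e1, e2]
  exact Real.exp_le_exp.2 hkey
lemma lower_eq (a α δ p : ℝ) (ha0 : 0 < a) (hα : 0 < α) (hδ : 1 < δ) (hp0 : 0 < p)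
    (hpL : p * Real.log δ = a * Real.log δ + a ^ 2 * α) :
    δ ^ (1 / p) * (p - a) ^ α
      = Real.exp (α - a * α / p) *
        ((a ^ 2 * α / Real.exp 1) ^ α * δ ^ (1 / a) * Real.log δ ^ (-α)) := by
  have hδ0 : (0:ℝ) < δ := by linarith
  have hL : 0 < Real.log δ := Real.log_pos hδ
  set L := Real.log δ with hLdef
  have hpa : p - a = a ^ 2 * α / L := by
    field_simp
    linarith [hpL]
  have e1 : δ ^ (1 / p) = Real.exp (L * (1 / p)) := by
    rw [Real.rpow_def_of_pos hδ0, ← hLdef]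
  have e3 : δ ^ (1 / a) = Real.exp (L * (1 / a)) := by
    rw [Real.rpow_def_of_pos hδ0, ← hLdef]
  have e4 : (p - a) ^ α = (a ^ 2 * α) ^ α / L ^ α := by
    rw [hpa]; exact Real.div_rpow (by positivity) hL.le α
  have e5 : (a ^ 2 * α / Real.exp 1) ^ α = (a ^ 2 * α) ^ α / Real.exp α := by
    rw [Real.div_rpow (by positivity) (Real.exp_pos 1).le, Real.exp_one_rpow]
  have e6 : L ^ (-α) = (L ^ α)⁻¹ := Real.rpow_neg hL.le _
  have e2 : Real.exp (L * (1 / p)) =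
      Real.exp (α - a * α / p) * Real.exp (L * (1 / a)) * (Real.exp α)⁻¹ := by
    rw [← Real.exp_neg, ← Real.exp_add, ← Real.exp_add]
    congr 1
    field_simp
    linear_combination (-1) * hpL
  rw [e1, e4, e5, e6, e2, e3]
  ring

lemma upper_eq (a η α δ : ℝ) (ha0 : 0 < a) (hη : 0 < η) (hα : 0 < α) (hδ : 1 < δ) :
    δ ^ (1 / a) * ((α / (Real.log δ / (a * (a + η)))) ^ α * Real.exp (-α))
      = ((a + η) / a) ^ α *
        ((a ^ 2 * α / Real.exp 1) ^ α * δ ^ (1 / a) * Real.log δ ^ (-α)) := by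
  have hδ0 : (0:ℝ) < δ := by linarith
  have hL : 0 < Real.log δ := Real.log_pos hδ
  set L := Real.log δ with hLdef
  have c1 : α / (L / (a * (a + η))) = a * (a + η) * α / L := by
    rw [div_div_eq_mul_div]; ring
  have c2 : (a * (a + η) * α / L) ^ α = (a * (a + η) * α) ^ α / L ^ α :=
    Real.div_rpow (by positivity) hL.le α
  have c3 : ((a + η) / a) ^ α * (a ^ 2 * α / Real.exp 1) ^ α
      = (a * (a + η) * α) ^ α / Real.exp α := by
    rw [← Real.mul_rpow (by positivity) (by positivity)]
    have : (a + η) / a * (a ^ 2 * α / Real.exp 1) = a * (a + η) * α / Real.exp 1 := by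
      field_simp
    rw [this, Real.div_rpow (by positivity) (Real.exp_pos 1).le, Real.exp_one_rpow]
  have e6 : L ^ (-α) = (L ^ α)⁻¹ := Real.rpow_neg hL.le _
  calc δ ^ (1 / a) * ((α / (L / (a * (a + η)))) ^ α * Real.exp (-α))
      = δ ^ (1 / a) * ((a * (a + η) * α) ^ α / L ^ α * Real.exp (-α)) := by rw [c1, c2]
    _ = (((a + η) / a) ^ α * (a ^ 2 * α / Real.exp 1) ^ α) * (δ ^ (1 / a) * (L ^ α)⁻¹) := by
        rw [c3, Real.exp_neg]; ring
    _ = ((a + η) / a) ^ α *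
        ((a ^ 2 * α / Real.exp 1) ^ α * δ ^ (1 / a) * L ^ (-α)) := by rw [e6]; ring

lemma BM_eq (a b η α δ : ℝ) (ha0 : 0 < a) (hη : 0 < η) (hα : 0 < α) (hδ : 1 < δ) :
    ((b - a) ^ α / (a ^ 2 * α / Real.exp 1) ^ α) *
        (Real.log δ / δ ^ ((1 / a - 1 / (a + η)) / α)) ^ α
      = ((b - a) ^ α * δ ^ (1 / (a + η))) /
        ((a ^ 2 * α / Real.exp 1) ^ α * δ ^ (1 / a) * Real.log δ ^ (-α)) := by
  have hδ0 : (0:ℝ) < δ := by linarith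
  have hL : 0 < Real.log δ := Real.log_pos hδ
  set L := Real.log δ with hLdef
  set r : ℝ := 1 / a - 1 / (a + η) with hrdef
  have e1 : (L / δ ^ (r / α)) ^ α = L ^ α / δ ^ r := by
    rw [Real.div_rpow hL.le (Real.rpow_nonneg hδ0.le _), ← Real.rpow_mul hδ0.le,
      div_mul_cancel₀ _ hα.ne']
  have e2 : δ ^ (1 / a) = δ ^ (1 / (a + η)) * δ ^ r := by
    rw [← Real.rpow_add hδ0]
    congr 1
    rw [hrdef]; ring
  have hK : (0:ℝ) < (a ^ 2 * α / Real.exp 1) ^ α := Real.rpow_pos_of_pos (by positivity) _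
  have hLα : (0:ℝ) < L ^ α := Real.rpow_pos_of_pos hL _
  have hδr : (0:ℝ) < δ ^ r := Real.rpow_pos_of_pos hδ0 _
  have hδη : (0:ℝ) < δ ^ (1 / (a + η)) := Real.rpow_pos_of_pos hδ0 _
  rw [e1, e2, Real.rpow_neg hL.le]
  field_simp


/-- Asymptotics of the fundamental function of `G(a,b;α,β)` as `δ → ∞`:
`sup_{p∈(a,b)} δ^{1/p} min((p-a)^α, (b-p)^β) ∼ (a²α/e)^α δ^{1/a} (log δ)^{-α}`. -/
theorem fund_asymptotics_infty (a b α β : ℝ) (ha : 1 ≤ a) (hab : a < b)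
    (hα : 0 < α) (hβ : 0 < β) :
    Tendsto (fun δ : ℝ =>
        sSup ((fun p : ℝ => δ ^ (1 / p) * min ((p - a) ^ α) ((b - p) ^ β)) '' Set.Ioo a b) /
          ((a ^ 2 * α / Real.exp 1) ^ α * δ ^ (1 / a) * Real.log δ ^ (-α)))
      atTop (𝓝 1) := by
  have ha0 : 0 < a := lt_of_lt_of_le one_pos ha
  have hba : 0 < b - a := sub_pos.2 hab
  set f : ℝ → ℝ → ℝ := fun δ p => δ ^ (1 / p) * min ((p - a) ^ α) ((b - p) ^ β) with hf
  set F : ℝ → ℝ := fun δ => sSup (f δ '' Set.Ioo a b) with hFdef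
  set M : ℝ → ℝ := fun δ => (a ^ 2 * α / Real.exp 1) ^ α * δ ^ (1 / a) * Real.log δ ^ (-α)
    with hMdef
  show Tendsto (fun δ => F δ / M δ) atTop (𝓝 1)
  have key_elem_bound : ∀ δ : ℝ, 1 ≤ δ → ∀ p ∈ Set.Ioo a b,
      f δ p ≤ δ ^ (1 / a) * (b - a) ^ α := by
    intro δ hδ p hp
    have h1 : δ ^ (1 / p) ≤ δ ^ (1 / a) :=
      Real.rpow_le_rpow_of_exponent_le hδ (one_div_le_one_div_of_le ha0 hp.1.le)
    have h2 : min ((p - a) ^ α) ((b - p) ^ β) ≤ (b - a) ^ α :=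
      (min_le_left _ _).trans
        (Real.rpow_le_rpow (by linarith [hp.1]) (by linarith [hp.2]) hα.le)
    have h3 : 0 ≤ min ((p - a) ^ α) ((b - p) ^ β) :=
      le_min (Real.rpow_nonneg (by linarith [hp.1]) _) (Real.rpow_nonneg (by linarith [hp.2]) _)
    exact mul_le_mul h1 h2 h3 (Real.rpow_nonneg (by linarith) _)
  have hbddAbove : ∀ δ : ℝ, 1 ≤ δ → BddAbove (f δ '' Set.Ioo a b) := by
    intro δ hδ
    refine ⟨δ ^ (1 / a) * (b - a) ^ α, ?_⟩
    rintro x ⟨p, hp, rfl⟩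
    exact key_elem_bound δ hδ p hp
  have hMev : ∀ᶠ δ : ℝ in atTop, 0 < M δ := by
    filter_upwards [eventually_gt_atTop 1] with δ hδ1
    have hL : 0 < Real.log δ := Real.log_pos hδ1
    exact mul_pos (mul_pos (Real.rpow_pos_of_pos (by positivity) _)
      (Real.rpow_pos_of_pos (by linarith) _)) (Real.rpow_pos_of_pos hL _)
  -- the lower comparison function
  set g : ℝ → ℝ := fun δ => Real.exp (α - a * α / (a + a ^ 2 * α / Real.log δ)) with hgdef
  have ht0 : Tendsto (fun δ : ℝ => a ^ 2 * α / Real.log δ) atTop (𝓝 0) :=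
    tendsto_const_nhds.div_atTop Real.tendsto_log_atTop
  have hpfa : Tendsto (fun δ : ℝ => a + a ^ 2 * α / Real.log δ) atTop (𝓝 a) := by
    have := (tendsto_const_nhds (x := a) (f := atTop (α := ℝ))).add ht0
    simpa using this
  have hg1 : Tendsto g atTop (𝓝 1) := by
    have h0 : Tendsto (fun δ : ℝ => α - a * α / (a + a ^ 2 * α / Real.log δ)) atTop
        (𝓝 (α - a * α / a)) := tendsto_const_nhds.sub (tendsto_const_nhds.div hpfa ha0.ne')
    have he : α - a * α / a = 0 := by field_simp; ring
    rw [he] at h0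
    have := (Real.continuous_exp.tendsto 0).comp h0
    simpa [hgdef, Function.comp_def] using this
  have htsmall : ∀ᶠ δ : ℝ in atTop, a ^ 2 * α / Real.log δ < (b - a) / 2 :=
    ht0.eventually_lt_const (by linarith)
  have htpow : ∀ᶠ δ : ℝ in atTop,
      (a ^ 2 * α / Real.log δ) ^ α < ((b - a) / 2) ^ β := by
    have hc : ContinuousAt (fun x : ℝ => x ^ α) 0 :=
      Real.continuousAt_rpow_const 0 α (Or.inr hα.le)
    have h2 : Tendsto (fun δ : ℝ => (a ^ 2 * α / Real.log δ) ^ α) atTop (𝓝 0) := by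
      have := hc.tendsto.comp ht0
      simpa [Real.zero_rpow hα.ne', Function.comp_def] using this
    exact h2.eventually_lt_const (Real.rpow_pos_of_pos (by linarith) _)
  -- lower bound : eventually g δ * M δ ≤ F δ
  have hlow : ∀ᶠ δ : ℝ in atTop, g δ * M δ ≤ F δ := by
    filter_upwards [eventually_gt_atTop 1, htsmall, htpow] with δ hδ1 hts htp
    have hδ0 : (0 : ℝ) < δ := by linarith
    have hL : 0 < Real.log δ := Real.log_pos hδ1
    have ht : 0 < a ^ 2 * α / Real.log δ := by positivity
    have hsub : a + a ^ 2 * α / Real.log δ - a = a ^ 2 * α / Real.log δ := by ring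
    have hpmem : a + a ^ 2 * α / Real.log δ ∈ Set.Ioo a b := ⟨by linarith, by linarith⟩
    have hmin : min ((a + a ^ 2 * α / Real.log δ - a) ^ α)
        ((b - (a + a ^ 2 * α / Real.log δ)) ^ β)
        = (a + a ^ 2 * α / Real.log δ - a) ^ α := by
      apply min_eq_left
      have h1 : ((b - a) / 2) ^ β ≤ (b - (a + a ^ 2 * α / Real.log δ)) ^ β :=
        Real.rpow_le_rpow (by linarith) (by linarith) hβ.le
      rw [hsub]
      exact le_trans (le_of_lt htp) h1
    have hle : f δ (a + a ^ 2 * α / Real.log δ) ≤ F δ :=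
      le_csSup (hbddAbove δ hδ1.le) (mem_image_of_mem _ hpmem)
    have heq : f δ (a + a ^ 2 * α / Real.log δ) = g δ * M δ := by
      show δ ^ (1 / (a + a ^ 2 * α / Real.log δ)) *
          min ((a + a ^ 2 * α / Real.log δ - a) ^ α)
            ((b - (a + a ^ 2 * α / Real.log δ)) ^ β) = _
      rw [hmin, hsub]
      have := lower_eq a α δ (a + a ^ 2 * α / Real.log δ) ha0 hα hδ1 (by linarith)
        (by field_simp)
      rw [hsub] at this
      exact this
    linarith
  rw [tendsto_order]
  constructor
  · intro c hc
    filter_upwards [hlow, hg1.eventually_const_lt hc, hMev] with δ h1 h2 h3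
    rw [lt_div_iff₀ h3]
    calc c * M δ < g δ * M δ := mul_lt_mul_of_pos_right h2 h3
    _ ≤ F δ := h1
  · intro c hc
    set d : ℝ := (1 + c) / 2 with hddef
    have hd1 : 1 < d := by rw [hddef]; linarith
    have hdc : d < c := by rw [hddef]; linarith
    have hd0 : 0 < d := by linarith
    have hξ : 1 < d ^ (1 / α) :=
      (Real.one_lt_rpow_iff_of_pos hd0).2 (Or.inl ⟨hd1, by positivity⟩)
    set η : ℝ := min ((b - a) / 2) (a * (d ^ (1 / α) - 1) / 2) with hηdef
    have hη0 : 0 < η := by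
      apply lt_min (by linarith)
      have h : 0 < d ^ (1 / α) - 1 := by linarith
      positivity
    have hηb : η < b - a := lt_of_le_of_lt (min_le_left _ _) (by linarith)
    have haη : 0 < a + η := by linarith
    set d' : ℝ := ((a + η) / a) ^ α with hd'def
    have hd'0 : 0 < d' := Real.rpow_pos_of_pos (by positivity) _
    have hd'd : d' ≤ d := by
      have h1 : (a + η) / a ≤ d ^ (1 / α) := by
        rw [div_le_iff₀ ha0]
        have h2 : η ≤ a * (d ^ (1 / α) - 1) / 2 := min_le_right _ _
        nlinarith [hξ]
      have h3 := Real.rpow_le_rpow (by positivity) h1 hα.le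
      rwa [← Real.rpow_mul hd0.le, one_div_mul_cancel hα.ne', Real.rpow_one] at h3
    -- upper estimate on F
    have hup : ∀ᶠ δ : ℝ in atTop,
        F δ ≤ d' * M δ + (b - a) ^ α * δ ^ (1 / (a + η)) := by
      filter_upwards [eventually_gt_atTop 1, hMev] with δ hδ1 hM
      have hδ0 : (0 : ℝ) < δ := by linarith
      have hL : 0 < Real.log δ := Real.log_pos hδ1
      have hB0 : 0 ≤ (b - a) ^ α * δ ^ (1 / (a + η)) := by positivity
      apply csSup_le ((Set.nonempty_Ioo.2 hab).image _)
      rintro x ⟨p, hp, rfl⟩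
      have hpa : 0 < p - a := sub_pos.2 hp.1
      have hp0 : 0 < p := by linarith [hp.1]
      have hmin0 : 0 ≤ min ((p - a) ^ α) ((b - p) ^ β) :=
        le_min (Real.rpow_nonneg hpa.le _) (Real.rpow_nonneg (by linarith [hp.2]) _)
      by_cases hcase : p ≤ a + η
      · -- near p = a
        have hcc : 0 < Real.log δ / (a * (a + η)) := by positivity
        have h1 : δ ^ (1 / p) ≤ δ ^ (1 / a) *
            Real.exp (-(Real.log δ / (a * (a + η)) * (p - a))) := by
          rw [Real.rpow_def_of_pos hδ0, Real.rpow_def_of_pos hδ0, ← Real.exp_add]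
          apply Real.exp_le_exp.2
          have e : 1 / p = 1 / a - (p - a) / (a * p) := by field_simp; ring
          have key : 1 / p ≤ 1 / a - (p - a) / (a * (a + η)) := by
            rw [e]
            have h5 : (p - a) / (a * (a + η)) ≤ (p - a) / (a * p) := by
              apply div_le_div_of_nonneg_left hpa.le (by positivity)
              nlinarith
            linarith
          have h2 := mul_le_mul_of_nonneg_left key hL.le
          have h3 : Real.log δ * (1 / a - (p - a) / (a * (a + η)))
              = Real.log δ * (1 / a) + -(Real.log δ / (a * (a + η)) * (p - a)) := by ring
          linarith
        have h2 : min ((p - a) ^ α) ((b - p) ^ β) ≤ (p - a) ^ α := min_le_left _ _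
        have h3 : (p - a) ^ α * Real.exp (-(Real.log δ / (a * (a + η)) * (p - a)))
            ≤ (α / (Real.log δ / (a * (a + η)))) ^ α * Real.exp (-α) :=
          rpow_mul_exp_le hα hcc hpa
        have step : f δ p ≤ δ ^ (1 / a) *
            ((α / (Real.log δ / (a * (a + η)))) ^ α * Real.exp (-α)) := by
          calc f δ p
              ≤ (δ ^ (1 / a) * Real.exp (-(Real.log δ / (a * (a + η)) * (p - a))))
                * ((p - a) ^ α) := mul_le_mul h1 h2 hmin0 (by positivity)
          _ = δ ^ (1 / a) *
                ((p - a) ^ α * Real.exp (-(Real.log δ / (a * (a + η)) * (p - a)))) := by ring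
          _ ≤ δ ^ (1 / a) * ((α / (Real.log δ / (a * (a + η)))) ^ α * Real.exp (-α)) :=
                mul_le_mul_of_nonneg_left h3 (by positivity)
        have hcalc := upper_eq a η α δ ha0 hη0 hα hδ1
        calc f δ p ≤ d' * M δ := by rw [hd'def, hMdef, ← hcalc]; exact step
        _ ≤ d' * M δ + (b - a) ^ α * δ ^ (1 / (a + η)) := le_add_of_nonneg_right hB0
      · -- far from a
        push_neg at hcase
        have h1 : δ ^ (1 / p) ≤ δ ^ (1 / (a + η)) :=
          Real.rpow_le_rpow_of_exponent_le hδ1.le (one_div_le_one_div_of_le haη hcase.le)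
        have h2 : min ((p - a) ^ α) ((b - p) ^ β) ≤ (b - a) ^ α :=
          (min_le_left _ _).trans (Real.rpow_le_rpow hpa.le (by linarith [hp.2]) hα.le)
        have h4 : f δ p ≤ (b - a) ^ α * δ ^ (1 / (a + η)) := by
          rw [mul_comm ((b - a) ^ α)]
          exact mul_le_mul h1 h2 hmin0 (by positivity)
        have hd'M : 0 ≤ d' * M δ := by positivity
        linarith
    -- B/M tends to 0
    have hr : 0 < 1 / a - 1 / (a + η) := by
      rw [sub_pos]
      exact one_div_lt_one_div_of_lt ha0 (by linarith)
    have hBM0 : Tendsto (fun δ : ℝ => ((b - a) ^ α * δ ^ (1 / (a + η))) / M δ)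
        atTop (𝓝 0) := by
      have h1 : Tendsto (fun δ : ℝ => Real.log δ / δ ^ ((1 / a - 1 / (a + η)) / α))
          atTop (𝓝 0) :=
        (isLittleO_log_rpow_atTop (by positivity)).tendsto_div_nhds_zero
      have h2 : Tendsto
          (fun δ : ℝ => (Real.log δ / δ ^ ((1 / a - 1 / (a + η)) / α)) ^ α) atTop (𝓝 0) := by
        have hc : ContinuousAt (fun x : ℝ => x ^ α) 0 :=
          Real.continuousAt_rpow_const 0 α (Or.inr hα.le)
        have := hc.tendsto.comp h1
        simpa [Real.zero_rpow hα.ne', Function.comp_def] using this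
      have h3 : Tendsto (fun δ : ℝ =>
          ((b - a) ^ α / (a ^ 2 * α / Real.exp 1) ^ α) *
            (Real.log δ / δ ^ ((1 / a - 1 / (a + η)) / α)) ^ α) atTop (𝓝 0) := by
        have := h2.const_mul ((b - a) ^ α / (a ^ 2 * α / Real.exp 1) ^ α)
        simpa using this
      apply h3.congr'
      filter_upwards [eventually_gt_atTop 1] with δ hδ1
      exact BM_eq a b η α δ ha0 hη0 hα hδ1
    have hdd' : 0 < c - d' := by linarith
    filter_upwards [hup, hBM0.eventually_lt_const hdd', hMev] with δ h1 h2 h3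
    have step : F δ / M δ ≤ d' + ((b - a) ^ α * δ ^ (1 / (a + η))) / M δ := by
      calc F δ / M δ ≤ (d' * M δ + (b - a) ^ α * δ ^ (1 / (a + η))) / M δ :=
            (div_le_div_iff_of_pos_right h3).2 h1
      _ = d' + ((b - a) ^ α * δ ^ (1 / (a + η))) / M δ := by
            rw [add_div, mul_div_assoc, div_self h3.ne', mul_one]
    linarith
end

section
/- Let a > 0, β > 0 and let δ ∈ (0, e^{−aβ}). Then sup_{p∈(a,∞)} δ^{1/p} · p^{−β} = ( β/(e · |log δ|) )^β, the supremum being attained at p = |log δ|/β. -/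
open Filter Set
open scoped Topology

/-- For `δ ∈ (0, e^{-aβ})`, the fundamental function computation for the weight `p^{-β}`
on `(a,∞)`: the supremum of `δ^{1/p} p^{-β}` over `p ∈ (a,∞)` is attained at
`p = |log δ|/β` and equals `(β/(e·|log δ|))^β`. -/
theorem fund_weight_pow_neg_beta (a β δ : ℝ) (ha : 0 < a) (hβ : 0 < β)
    (hδ0 : 0 < δ) (hδ : δ < Real.exp (-(a * β))) :
    |Real.log δ| / β ∈ Set.Ioi a ∧
    IsGreatest ((fun p : ℝ => δ ^ (1 / p) * p ^ (-β)) '' Set.Ioi a)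
      ((fun p : ℝ => δ ^ (1 / p) * p ^ (-β)) (|Real.log δ| / β)) ∧
    (fun p : ℝ => δ ^ (1 / p) * p ^ (-β)) (|Real.log δ| / β) =
      (β / (Real.exp 1 * |Real.log δ|)) ^ β := by
  have hδ1 : δ < 1 := hδ.trans (by
    rw [Real.exp_lt_one_iff]; nlinarith)
  have hlog : Real.log δ < 0 := Real.log_neg hδ0 hδ1
  set L : ℝ := -Real.log δ with hLdef
  have habs : |Real.log δ| = L := abs_of_neg hlog
  have hLa : a * β < L := by
    have h := Real.log_lt_log hδ0 hδ
    rw [Real.log_exp] at h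
    linarith
  have hL0 : 0 < L := lt_trans (mul_pos ha hβ) hLa
  have hp0 : (0:ℝ) < L / β := div_pos hL0 hβ
  have hmem : L / β ∈ Set.Ioi a := by
    simp only [Set.mem_Ioi]
    rw [lt_div_iff₀ hβ]
    exact hLa
  rw [habs]
  refine ⟨hmem, ⟨⟨L / β, hmem, rfl⟩, ?_⟩, ?_⟩
  · rintro y ⟨p, hp, rfl⟩
    have hpp : (0:ℝ) < p := ha.trans hp
    simp only
    rw [Real.rpow_def_of_pos hδ0, Real.rpow_def_of_pos hpp,
        Real.rpow_def_of_pos hδ0, Real.rpow_def_of_pos hp0,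
        ← Real.exp_add, ← Real.exp_add, Real.exp_le_exp]
    have hlogdiv : Real.log (L / β) = Real.log L - Real.log β :=
      Real.log_div (ne_of_gt hL0) (ne_of_gt hβ)
    have key : Real.log (L / (β * p)) ≤ L / (β * p) - 1 :=
      Real.log_le_sub_one_of_pos (div_pos hL0 (mul_pos hβ hpp))
    have hlogdiv2 : Real.log (L / (β * p)) = Real.log L - Real.log β - Real.log p := by
      rw [Real.log_div (ne_of_gt hL0) (ne_of_gt (mul_pos hβ hpp)),
          Real.log_mul (ne_of_gt hβ) (ne_of_gt hpp)]
      ring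
    rw [hlogdiv2] at key
    have key2 : β * (Real.log L - Real.log β - Real.log p) ≤ L / p - β := by
      have := mul_le_mul_of_nonneg_left key hβ.le
      have heq : β * (L / (β * p) - 1) = L / p - β := by
        field_simp
      linarith [heq ▸ this]
    have hLdδ : Real.log δ = -L := by rw [hLdef]; ring
    rw [hLdδ, hlogdiv]
    have h1 : -L * (1 / p) = -(L / p) := by ring
    have h2 : -L * (1 / (L / β)) = -β := by field_simp
    rw [h1, h2]
    nlinarith
  · simp only
    have hδβL : δ ^ (1 / (L / β)) = Real.exp (-β) := by
      rw [Real.rpow_def_of_pos hδ0]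
      congr 1
      have hLdδ : Real.log δ = -L := by rw [hLdef]; ring
      rw [hLdδ]
      field_simp
    rw [hδβL]
    rw [Real.rpow_neg hp0.le, ← Real.inv_rpow hp0.le, inv_div]
    rw [Real.div_rpow hβ.le hL0.le, Real.div_rpow hβ.le (by positivity),
        Real.mul_rpow (Real.exp_pos 1).le hL0.le, Real.exp_one_rpow]
    rw [Real.exp_neg]
    field_simp
end

section
/- Let α > 0 and 1 ≤ a < h < ∞, and let δ ≥ exp(α h²/(h−a)). Put p₁ = log δ/(2α) − √( (log δ)²/(4α²) − a·log δ/α ). Then p₁ ∈ (a,h] and sup_{p∈(a,h]} δ^{1/p} (p−a)^α = δ^{1/p₁} (p₁ − a)^α. -/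
open Filter Set
open scoped Topology

set_option maxHeartbeats 800000

/-- For `δ ≥ exp(αh²/(h-a))`, the supremum of `δ^{1/p}(p-a)^α` over `p ∈ (a,h]` is
attained at `p₁ = log δ/(2α) - √((log δ)²/(4α²) - a log δ/α) ∈ (a,h]`. -/
theorem fund_weight_left (α a h δ : ℝ) (hα : 0 < α) (ha : 1 ≤ a) (hah : a < h)
    (hδ : Real.exp (α * h ^ 2 / (h - a)) ≤ δ)
    (p₁ : ℝ)
    (hp₁ : p₁ = Real.log δ / (2 * α) -
      Real.sqrt (Real.log δ ^ 2 / (4 * α ^ 2) - a * Real.log δ / α)) :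
    p₁ ∈ Set.Ioc a h ∧
    sSup ((fun p : ℝ => δ ^ (1 / p) * (p - a) ^ α) '' Set.Ioc a h) =
      δ ^ (1 / p₁) * (p₁ - a) ^ α := by
  have ha0 : (0:ℝ) < a := lt_of_lt_of_le one_pos ha
  have hha : 0 < h - a := sub_pos.2 hah
  have hδ0 : (0:ℝ) < δ := lt_of_lt_of_le (Real.exp_pos _) hδ
  set L := Real.log δ with hLdef
  have hL : α * h ^ 2 / (h - a) ≤ L := (Real.le_log_iff_exp_le hδ0).2 hδ
  have hL4 : 4 * α * a ≤ L := by
    refine le_trans ?_ hL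
    rw [le_div_iff₀ hha]
    nlinarith [sq_nonneg (h - 2*a)]
  have hL0 : 0 < L := lt_of_lt_of_le (by positivity) hL4
  have hα' : α ≠ 0 := ne_of_gt hα
  have hD : 0 ≤ L ^ 2 / (4 * α ^ 2) - a * L / α := by
    rw [sub_nonneg, div_le_div_iff₀ hα (by positivity)]
    nlinarith [mul_le_mul_of_nonneg_left hL4 (le_of_lt (mul_pos hL0 hα))]
  set s := Real.sqrt (L ^ 2 / (4 * α ^ 2) - a * L / α) with hsdef
  have hs0 : 0 ≤ s := Real.sqrt_nonneg _
  have hs2 : s ^ 2 = L ^ 2 / (4 * α ^ 2) - a * L / α := Real.sq_sqrt hD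
  have hroot : α * p₁ ^ 2 - L * p₁ + a * L = 0 := by
    rw [hp₁]
    field_simp at hs2 ⊢
    nlinarith [hs2]
  have hap₁ : a < p₁ := by
    rw [hp₁]
    have h1 : a < L / (2*α) := by
      rw [lt_div_iff₀ (by positivity)]; nlinarith
    have e1 : L^2/(4*α^2) - a*L/α = (L/(2*α) - a)^2 - a^2 := by
      field_simp; ring
    have h2 : s < L/(2*α) - a := by
      rw [hsdef]
      refine (Real.sqrt_lt' (by linarith)).2 ?_
      rw [e1]; nlinarith
    linarith
  have hp₁h : p₁ ≤ h := by
    rw [hp₁, sub_le_comm]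
    rcases le_or_gt (L/(2*α) - h) 0 with hc | hc
    · linarith
    · refine le_trans (le_of_eq rfl) ((Real.le_sqrt' hc).2 ?_)
      have e1 : (L/(2*α) - h)^2 = L^2/(4*α^2) - h*L/α + h^2 := by
        field_simp; ring
      rw [e1]
      have h2 : h^2 ≤ (h-a)*L/α := by
        rw [le_div_iff₀ hα]
        nlinarith [(div_le_iff₀ hha).1 hL]
      have e2 : h*L/α - a*L/α = (h-a)*L/α := by ring
      linarith
  have hmem : p₁ ∈ Set.Ioc a h := ⟨hap₁, hp₁h⟩
  -- auxiliary bound 2αp₁ ≤ L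
  have h2p₁ : 2*α*p₁ ≤ L := by
    have e : 2*α*(L/(2*α) - s) = L - 2*α*s := by field_simp
    rw [hp₁, e]
    nlinarith [mul_nonneg hα.le hs0]
  -- derivative of the log of the objective
  have hder : ∀ p : ℝ, a < p →
      HasDerivAt (fun x : ℝ => L * x⁻¹ + α * Real.log (x - a))
        (L * (-(p^2)⁻¹) + α * (p - a)⁻¹) p := by
    intro p hp
    have hp0 : p ≠ 0 := ne_of_gt (lt_trans ha0 hp)
    have hpa : p - a ≠ 0 := ne_of_gt (sub_pos.2 hp)
    have h1 := (hasDerivAt_inv hp0).const_mul L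
    have h2 : HasDerivAt (fun x : ℝ => Real.log (x - a)) ((p - a)⁻¹) p := by
      have := (Real.hasDerivAt_log hpa).comp p ((hasDerivAt_id p).sub_const a)
      simpa [Function.comp_def] using this
    exact h1.add (h2.const_mul α)
  have hmono : MonotoneOn (fun x : ℝ => L * x⁻¹ + α * Real.log (x - a)) (Set.Ioc a p₁) := by
    refine monotoneOn_of_deriv_nonneg (convex_Ioc a p₁)
      (fun p hp => ((hder p hp.1).continuousAt).continuousWithinAt) ?_ ?_
    · rw [interior_Ioc]
      exact fun p hp => ((hder p hp.1).differentiableAt).differentiableWithinAt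
    · rw [interior_Ioc]
      intro p hp
      rw [(hder p hp.1).deriv]
      have hp0 : 0 < p := lt_trans ha0 hp.1
      have hpa : 0 < p - a := sub_pos.2 hp.1
      have hfac : 0 ≤ (p₁ - p) * (L - α*p - α*p₁) :=
        mul_nonneg (by linarith [hp.2]) (by nlinarith [h2p₁, mul_nonneg hα.le (sub_nonneg.2 hp.2.le)])
      have h2 : L / p^2 ≤ α / (p - a) := by
        rw [div_le_div_iff₀ (by positivity) hpa]
        nlinarith [hroot, hfac]
      have e : L * (-(p^2)⁻¹) + α * (p-a)⁻¹ = α/(p-a) - L/p^2 := by ring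
      rw [e]; linarith
  have hanti : AntitoneOn (fun x : ℝ => L * x⁻¹ + α * Real.log (x - a)) (Set.Icc p₁ h) := by
    refine antitoneOn_of_deriv_nonpos (convex_Icc p₁ h)
      (fun p hp => ((hder p (lt_of_lt_of_le hap₁ hp.1)).continuousAt).continuousWithinAt) ?_ ?_
    · rw [interior_Icc]
      exact fun p hp =>
        ((hder p (lt_trans hap₁ hp.1)).differentiableAt).differentiableWithinAt
    · rw [interior_Icc]
      intro p hp
      rw [(hder p (lt_trans hap₁ hp.1)).deriv]
      have hp0 : 0 < p := lt_trans ha0 (lt_trans hap₁ hp.1)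
      have hpa : 0 < p - a := sub_pos.2 (lt_trans hap₁ hp.1)
      have hq_h : α*h^2 - L*h + a*L ≤ 0 := by
        nlinarith [(div_le_iff₀ hha).1 hL]
      have hsum : α*h + α*p₁ ≤ L := by
        by_contra hco
        push_neg at hco
        nlinarith [hroot, hq_h, mul_pos (sub_pos.2 (lt_trans hp.1 hp.2))
          (sub_pos.2 hco)]
      have hfac : 0 ≤ (p - p₁) * (L - α*p - α*p₁) :=
        mul_nonneg (by linarith [hp.1]) (by nlinarith [hsum, mul_nonneg hα.le (sub_nonneg.2 hp.2.le)])
      have h2 : α / (p - a) ≤ L / p^2 := by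
        rw [div_le_div_iff₀ hpa (by positivity)]
        nlinarith [hroot, hfac]
      have e : L * (-(p^2)⁻¹) + α * (p-a)⁻¹ = α/(p-a) - L/p^2 := by ring
      rw [e]; linarith
  have hgle : ∀ p ∈ Set.Ioc a h,
      L * p⁻¹ + α * Real.log (p - a) ≤ L * p₁⁻¹ + α * Real.log (p₁ - a) := by
    intro p hp
    rcases le_or_gt p p₁ with hc | hc
    · exact hmono ⟨hp.1, hc⟩ ⟨hap₁, le_refl p₁⟩ hc
    · exact hanti ⟨le_refl p₁, hp₁h⟩ ⟨hc.le, hp.2⟩ hc.le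
  have key : ∀ p ∈ Set.Ioc a h,
      δ ^ (1/p) * (p - a) ^ α = Real.exp (L * p⁻¹ + α * Real.log (p - a)) := by
    intro p hp
    rw [Real.rpow_def_of_pos hδ0, Real.rpow_def_of_pos (sub_pos.2 hp.1), ← Real.exp_add]
    congr 1
    rw [← hLdef, one_div]
    ring
  refine ⟨hmem, ?_⟩
  apply IsGreatest.csSup_eq
  constructor
  · exact ⟨p₁, hmem, rfl⟩
  · rintro x ⟨p, hp, rfl⟩
    show δ ^ (1/p) * (p - a) ^ α ≤ δ ^ (1/p₁) * (p₁ - a) ^ α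
    rw [key p hp, key p₁ hmem]
    exact Real.exp_le_exp.2 (hgle p hp)
end

section
/- Let 1 ≤ a < b < ∞, γ > −1/b, ν > −1/b, and define f : ℝ → ℝ by f(x) = 1_{{|x|≥1}} |x|^{−1/a} (log|x|)^γ + 1_{{0<|x|<1}} |x|^{−1/b} |log|x||^ν. Then, with respect to Lebesgue measure on ℝ: (i) sup_{p∈(a,b)} min((p−a)^{γ+1/a}, (b−p)^{ν+1/b}) · |f|_p < ∞; (ii) lim_{p→b−} (b−p)^{ν+1/b} |f|_p = b^{ν+1/b} (2Γ(bν+1))^{1/b} > 0; and (iii) lim_{p→a+} (p−a)^{γ+1/a} |f|_p = a^{γ+1/a} (2Γ(aγ+1))^{1/a} > 0. In particular f belongs to the Grand Lebesgue space G(a,b; γ+1/a, ν+1/b) but not to its subspace G°. -/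
open MeasureTheory Filter Set Real
open scoped Topology


lemma gamma_int (b d : ℝ) (hb : 0 < b) (hd : -1 < d) :
    ∫ t in Ioi (0:ℝ), t ^ d * Real.exp (-(b*t)) = b ^ (-(d+1)) * Real.Gamma (d+1) := by
  have := integral_rpow_mul_exp_neg_mul_rpow (p := 1) one_pos hd hb
  simp only [Real.rpow_one, div_one, one_mul, neg_mul, mul_one] at this ⊢
  rw [this]

lemma gamma_integrable (b d : ℝ) (hb : 0 < b) (hd : -1 < d) :
    IntegrableOn (fun t => t ^ d * Real.exp (-(b*t))) (Ioi (0:ℝ)) := by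
  have := integrableOn_rpow_mul_exp_neg_mul_rpow (p := 1) hd one_pos hb
  simpa only [Real.rpow_one, neg_mul] using this

lemma exp_image_Ioi : Real.exp '' Ioi (0:ℝ) = Ioi 1 := by
  ext x
  constructor
  · rintro ⟨t, ht, rfl⟩
    exact by rw [show (1:ℝ) = Real.exp 0 from (Real.exp_zero).symm]; exact Real.exp_lt_exp.mpr ht
  · intro hx
    exact ⟨Real.log x, Real.log_pos hx, Real.exp_log (lt_trans one_pos hx)⟩

lemma int_Ioi_one (c d : ℝ) (hc : 1 < c) (hd : -1 < d) :
    ∫ x in Ioi (1:ℝ), x ^ (-c) * Real.log x ^ d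
      = (c-1) ^ (-(d+1)) * Real.Gamma (d+1) := by
  rw [← exp_image_Ioi, integral_image_eq_integral_abs_deriv_smul measurableSet_Ioi
    (fun t _ => (Real.hasDerivAt_exp t).hasDerivWithinAt) Real.exp_injective.injOn]
  rw [← gamma_int (c-1) d (by linarith) hd]
  refine setIntegral_congr_fun measurableSet_Ioi (fun t ht => ?_)
  have h1 : Real.exp t ^ (-c) = Real.exp (t * (-c)) := by
    rw [Real.rpow_def_of_pos (Real.exp_pos t), Real.log_exp]
  rw [smul_eq_mul, abs_of_pos (Real.exp_pos t), h1, Real.log_exp]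
  rw [show -((c-1)*t) = t * (-c) + t by ring, Real.exp_add]
  ring

lemma integrable_Ioi_one (c d : ℝ) (hc : 1 < c) (hd : -1 < d) :
    IntegrableOn (fun x => x ^ (-c) * Real.log x ^ d) (Ioi (1:ℝ)) := by
  rw [← exp_image_Ioi, integrableOn_image_iff_integrableOn_abs_deriv_smul measurableSet_Ioi
    (fun t _ => (Real.hasDerivAt_exp t).hasDerivWithinAt) Real.exp_injective.injOn]
  refine ((gamma_integrable (c-1) d (by linarith) hd).congr_fun (fun t ht => ?_) measurableSet_Ioi)
  have h1 : Real.exp t ^ (-c) = Real.exp (t * (-c)) := by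
    rw [Real.rpow_def_of_pos (Real.exp_pos t), Real.log_exp]
  rw [smul_eq_mul, abs_of_pos (Real.exp_pos t), h1, Real.log_exp]
  dsimp only
  rw [show -((c-1)*t) = t * (-c) + t by ring, Real.exp_add]
  ring

lemma exp_neg_image_Ioi : (fun t => Real.exp (-t)) '' Ioi (0:ℝ) = Ioo 0 1 := by
  ext x
  constructor
  · rintro ⟨t, ht, rfl⟩
    exact ⟨Real.exp_pos _, Real.exp_lt_one_iff.mpr (by simpa using (mem_Ioi.mp ht))⟩
  · rintro ⟨hx0, hx1⟩
    refine ⟨-Real.log x, ?_, by simp [Real.exp_log hx0]⟩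
    simpa using Real.log_neg hx0 hx1

lemma exp_neg_injOn : InjOn (fun t : ℝ => Real.exp (-t)) (Ioi 0) := by
  intro s _ t _ h
  simpa using Real.exp_injective h

lemma key_eq (c d t : ℝ) (ht : t ∈ Ioi (0:ℝ)) :
    |(-Real.exp (-t))| • (Real.exp (-t) ^ (-c) * (-Real.log (Real.exp (-t))) ^ d)
      = t ^ d * Real.exp (-((1-c)*t)) := by
  have h1 : Real.exp (-t) ^ (-c) = Real.exp ((-t) * (-c)) := by
    rw [Real.rpow_def_of_pos (Real.exp_pos _), Real.log_exp]
  rw [smul_eq_mul, abs_neg, abs_of_pos (Real.exp_pos _), h1, Real.log_exp, neg_neg]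
  rw [show -((1-c)*t) = (-t) * (-c) + (-t) by ring, Real.exp_add]
  ring

lemma int_Ioo_01 (c d : ℝ) (hc : c < 1) (hd : -1 < d) :
    ∫ x in Ioo (0:ℝ) 1, x ^ (-c) * (-Real.log x) ^ d
      = (1-c) ^ (-(d+1)) * Real.Gamma (d+1) := by
  rw [← exp_neg_image_Ioi, integral_image_eq_integral_abs_deriv_smul (f' := fun t => -Real.exp (-t))
    measurableSet_Ioi (fun t _ => by simpa [Function.comp_def, mul_comm] using (((Real.hasDerivAt_exp (-t)).comp t (hasDerivAt_neg t)).hasDerivWithinAt (s := Ioi 0)))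
    exp_neg_injOn]
  rw [← gamma_int (1-c) d (by linarith) hd]
  exact setIntegral_congr_fun measurableSet_Ioi (fun t ht => by
    simpa [mul_comm] using key_eq c d t ht)

lemma integrable_Ioo_01 (c d : ℝ) (hc : c < 1) (hd : -1 < d) :
    IntegrableOn (fun x => x ^ (-c) * (-Real.log x) ^ d) (Ioo (0:ℝ) 1) := by
  rw [← exp_neg_image_Ioi, integrableOn_image_iff_integrableOn_abs_deriv_smul
    (f' := fun t => -Real.exp (-t)) measurableSet_Ioi
    (fun t _ => by simpa [Function.comp_def, mul_comm] using (((Real.hasDerivAt_exp (-t)).comp t (hasDerivAt_neg t)).hasDerivWithinAt (s := Ioi 0)))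
    exp_neg_injOn]
  exact (gamma_integrable (1-c) d (by linarith) hd).congr_fun
    (fun t ht => (key_eq c d t ht).symm) measurableSet_Ioi

lemma pointwise_eq (a b γ ν p : ℝ) (ha : 0 < a) (hb : 0 < b) (hp0 : 0 < p)
    (f : ℝ → ℝ)
    (hf : ∀ x, f x =
      Set.indicator {x : ℝ | 1 ≤ |x|}
        (fun x => |x| ^ (-(1 / a)) * Real.log |x| ^ γ) x +
      Set.indicator {x : ℝ | 0 < |x| ∧ |x| < 1}
        (fun x => |x| ^ (-(1 / b)) * (abs (Real.log |x|)) ^ ν) x) (x : ℝ) :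
    |f x| ^ p = (Ici (1:ℝ)).indicator (fun t => t ^ (-(p/a)) * Real.log t ^ (p*γ)) |x|
      + (Ioo (0:ℝ) 1).indicator (fun t => t ^ (-(p/b)) * (-Real.log t) ^ (p*ν)) |x| := by
  rw [hf x]
  rcases lt_or_ge |x| 1 with hx1 | hx1
  · rcases eq_or_lt_of_le (abs_nonneg x) with hx0 | hx0
    · have hx : x = 0 := abs_eq_zero.mp hx0.symm
      subst hx
      norm_num [Real.zero_rpow (ne_of_gt hp0)]
    · -- 0 < |x| < 1
      rw [Set.indicator_of_notMem (show x ∉ {x : ℝ | 1 ≤ |x|} by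
          simp only [mem_setOf_eq, not_le]; exact hx1),
        Set.indicator_of_mem (show x ∈ {x : ℝ | 0 < |x| ∧ |x| < 1} from ⟨hx0, hx1⟩),
        Set.indicator_of_notMem (show |x| ∉ Ici (1:ℝ) from not_le.mpr hx1),
        Set.indicator_of_mem (Set.mem_Ioo.mpr ⟨hx0, hx1⟩), zero_add, zero_add]
      have hlneg : Real.log |x| < 0 := Real.log_neg hx0 hx1
      have hl0 : (0:ℝ) ≤ -Real.log |x| := by linarith
      rw [abs_of_neg hlneg, abs_of_nonneg (mul_nonneg (Real.rpow_nonneg (abs_nonneg x) _)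
          (Real.rpow_nonneg hl0 _)),
        Real.mul_rpow (Real.rpow_nonneg (abs_nonneg x) _) (Real.rpow_nonneg hl0 _),
        ← Real.rpow_mul (abs_nonneg x), ← Real.rpow_mul (by linarith : (0:ℝ) ≤ -Real.log |x|),
        show (-(1/b))*p = -(p/b) by ring, show ν*p = p*ν from mul_comm ν p]
  · -- 1 ≤ |x|
    rw [Set.indicator_of_mem (show x ∈ {x : ℝ | 1 ≤ |x|} from hx1),
      Set.indicator_of_notMem (show x ∉ {x : ℝ | 0 < |x| ∧ |x| < 1} by
        simp only [mem_setOf_eq, not_and, not_lt]; intro _; exact hx1),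
      Set.indicator_of_mem (Set.mem_Ici.mpr hx1),
      Set.indicator_of_notMem (show |x| ∉ Ioo (0:ℝ) 1 by
        simp only [mem_Ioo, not_and, not_lt]; intro _; exact hx1), add_zero, add_zero]
    have hlog : (0:ℝ) ≤ Real.log |x| := Real.log_nonneg hx1
    rw [abs_of_nonneg (by positivity), Real.mul_rpow (by positivity) (by positivity),
      ← Real.rpow_mul (abs_nonneg x), ← Real.rpow_mul hlog,
      show (-(1/a))*p = -(p/a) by ring, show γ*p = p*γ from mul_comm γ p]

lemma main_formula (a b γ ν p : ℝ) (ha : 0 < a) (hb : 0 < b)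
    (hpa : a < p) (hpb : p < b) (hγ : -1 < p*γ) (hν : -1 < p*ν)
    (f : ℝ → ℝ)
    (hf : ∀ x, f x =
      Set.indicator {x : ℝ | 1 ≤ |x|}
        (fun x => |x| ^ (-(1 / a)) * Real.log |x| ^ γ) x +
      Set.indicator {x : ℝ | 0 < |x| ∧ |x| < 1}
        (fun x => |x| ^ (-(1 / b)) * (abs (Real.log |x|)) ^ ν) x) :
    ∫ x : ℝ, |f x| ^ p =
      2 * ((p/a - 1) ^ (-(p*γ+1)) * Real.Gamma (p*γ+1)
         + (1 - p/b) ^ (-(p*ν+1)) * Real.Gamma (p*ν+1)) := by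
  have hp0 : 0 < p := lt_trans ha hpa
  have hca : 1 < p/a := (one_lt_div ha).mpr hpa
  have hcb : p/b < 1 := (div_lt_one hb).mpr hpb
  set g₁ : ℝ → ℝ := fun t => t ^ (-(p/a)) * Real.log t ^ (p*γ) with hg₁
  set g₂ : ℝ → ℝ := fun t => t ^ (-(p/b)) * (-Real.log t) ^ (p*ν) with hg₂
  have h1 : (fun x : ℝ => |f x| ^ p)
      = fun x => ((Ici (1:ℝ)).indicator g₁ + (Ioo (0:ℝ) 1).indicator g₂) |x| :=
    funext (pointwise_eq a b γ ν p ha hb hp0 f hf)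
  rw [h1, integral_comp_abs]
  have hI1 : IntegrableOn g₁ (Ici (1:ℝ)) :=
    (integrableOn_Ici_iff_integrableOn_Ioi).mpr (integrable_Ioi_one (p/a) (p*γ) hca hγ)
  have hI2 : IntegrableOn g₂ (Ioo (0:ℝ) 1) := integrable_Ioo_01 (p/b) (p*ν) hcb hν
  have hint1 : Integrable ((Ici (1:ℝ)).indicator g₁) (volume.restrict (Ioi 0)) := by
    rw [integrable_indicator_iff measurableSet_Ici, IntegrableOn,
      Measure.restrict_restrict measurableSet_Ici,
      show Ici (1:ℝ) ∩ Ioi 0 = Ici 1 from Set.inter_eq_left.mpr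
        (fun x hx => mem_Ioi.mpr (lt_of_lt_of_le one_pos hx))]
    exact hI1
  have hint2 : Integrable ((Ioo (0:ℝ) 1).indicator g₂) (volume.restrict (Ioi 0)) := by
    rw [integrable_indicator_iff measurableSet_Ioo, IntegrableOn,
      Measure.restrict_restrict measurableSet_Ioo,
      show Ioo (0:ℝ) 1 ∩ Ioi 0 = Ioo 0 1 from Set.inter_eq_left.mpr
        (fun x hx => hx.1)]
    exact hI2
  rw [show ((Ici (1:ℝ)).indicator g₁ + (Ioo (0:ℝ) 1).indicator g₂)
      = fun t => (Ici (1:ℝ)).indicator g₁ t + (Ioo (0:ℝ) 1).indicator g₂ t from rfl,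
    integral_add hint1 hint2, setIntegral_indicator measurableSet_Ici,
    setIntegral_indicator measurableSet_Ioo,
    show Ioi (0:ℝ) ∩ Ici 1 = Ici 1 from Set.inter_eq_right.mpr
      (fun x hx => mem_Ioi.mpr (lt_of_lt_of_le one_pos hx)),
    show Ioi (0:ℝ) ∩ Ioo 0 1 = Ioo 0 1 from Set.inter_eq_right.mpr
      (fun x hx => hx.1),
    integral_Ici_eq_integral_Ioi, int_Ioi_one (p/a) (p*γ) hca hγ,
    int_Ioo_01 (p/b) (p*ν) hcb hν]

lemma rpow_shift (x c s e : ℝ) (hx : 0 < x) (hc : 0 < c) :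
    x ^ e * (x/c) ^ (-s) = c ^ s * x ^ (e - s) := by
  rw [Real.div_rpow hx.le hc.le, Real.rpow_neg hx.le, Real.rpow_neg hc.le, div_inv_eq_mul,
    show e - s = e + (-s) by ring, Real.rpow_add hx, Real.rpow_neg hx.le]
  ring

lemma tendsto_rpow_self_mul (c : ℝ) :
    Tendsto (fun x : ℝ => x ^ (x * c)) (𝓝[>] (0:ℝ)) (𝓝 1) := by
  have h := (tendsto_log_mul_rpow_nhdsGT_zero one_pos).mul_const c
  have h2 := (Real.continuous_exp.tendsto 0).comp (by simpa using h)
  rw [Real.exp_zero] at h2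
  refine h2.congr' (eventually_mem_nhdsWithin.mono fun x (hx : x ∈ Ioi 0) => ?_)
  show rexp (Real.log x * x * c) = x ^ (x * c)
  rw [Real.rpow_def_of_pos hx]
  congr 1
  ring

-- Gamma continuity helper
lemma gamma_tendsto (c q : ℝ) (hq : 0 < q*c+1) (l : Filter ℝ) (h : Tendsto (fun p => p) l (𝓝 q)) :
    Tendsto (fun p => Real.Gamma (p*c+1)) l (𝓝 (Real.Gamma (q*c+1))) := by
  have hG : ContinuousAt Real.Gamma (q*c+1) :=
    (Real.differentiableAt_Gamma (fun m => by
      have : (0:ℝ) ≤ m := Nat.cast_nonneg m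
      intro hcon; rw [hcon] at hq; linarith)).continuousAt
  exact hG.tendsto.comp (((h.mul_const c).add_const 1))

lemma pos_mul_add_one {b p c : ℝ} (hb : 0 < b) (hp : 0 < p) (hpb : p ≤ b) (hc : -1/b < c) :
    0 < p * c + 1 := by
  have h1 : 0 < p * (c + 1/b) := mul_pos hp (by rw [neg_div] at hc; linarith)
  have h2 : p * (1/b) ≤ 1 := by
    rw [mul_one_div, div_le_one hb]; exact hpb
  nlinarith

lemma tendsto_at_a (a b γ ν : ℝ) (ha0 : 0 < a) (hab : a < b) (hγ : -1/b < γ) (hν : -1/b < ν) :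
    Tendsto (fun p : ℝ => (p - a) ^ (γ + 1/a) *
        (2 * ((p/a - 1) ^ (-(p*γ+1)) * Real.Gamma (p*γ+1)
           + (1 - p/b) ^ (-(p*ν+1)) * Real.Gamma (p*ν+1))) ^ (1/p))
      (𝓝[>] a) (𝓝 (a ^ (γ + 1/a) * (2 * Real.Gamma (a*γ+1)) ^ (1/a))) := by
  have hb0 : 0 < b := lt_trans ha0 hab
  have hga : 0 < a*γ+1 := pos_mul_add_one hb0 ha0 hab.le hγ
  have hna : 0 < a*ν+1 := pos_mul_add_one hb0 ha0 hab.le hν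
  set l := 𝓝[>] a with hl
  have hid : Tendsto (fun p : ℝ => p) l (𝓝 a) := tendsto_id.mono_left nhdsWithin_le_nhds
  have hsub : Tendsto (fun p : ℝ => p - a) l (𝓝[>] (0:ℝ)) := by
    rw [tendsto_nhdsWithin_iff]
    exact ⟨by simpa using hid.sub_const a,
      eventually_mem_nhdsWithin.mono fun p hp => mem_Ioi.mpr (sub_pos.mpr hp)⟩
  have G1 := gamma_tendsto γ a hga l hid
  have G2 := gamma_tendsto ν a hna l hid
  have P1 : Tendsto (fun p : ℝ => a ^ (p*γ+1)) l (𝓝 (a^(a*γ+1))) :=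
    tendsto_const_nhds.rpow ((hid.mul_const γ).add_const 1) (Or.inl (ne_of_gt ha0))
  have X1 : Tendsto (fun p : ℝ => (p-a) ^ ((p-a) * (1/a))) l (𝓝 1) :=
    (tendsto_rpow_self_mul (1/a)).comp hsub
  have hexp : 0 < (γ+1/a)*a := by
    have : (γ+1/a)*a = a*γ+1 := by field_simp
    rw [this]; exact hga
  have X2 : Tendsto (fun p : ℝ => (p-a) ^ ((γ+1/a)*p)) l (𝓝 0) := by
    have h := (hsub.mono_right nhdsWithin_le_nhds).rpow (hid.const_mul (γ+1/a)) (Or.inr hexp)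
    rwa [Real.zero_rpow (ne_of_gt hexp)] at h
  have hab' : 0 < 1 - a/b := by
    have := (div_lt_one hb0).mpr hab; linarith
  have Y : Tendsto (fun p : ℝ => (1 - p/b) ^ (-(p*ν+1))) l (𝓝 ((1-a/b) ^ (-(a*ν+1)))) :=
    (tendsto_const_nhds.sub (hid.div_const b)).rpow
      (((hid.mul_const ν).add_const 1).neg) (Or.inl (ne_of_gt hab'))
  have h_main : Tendsto (fun p : ℝ =>
      2*(Real.Gamma (p*γ+1) * (a^(p*γ+1) * (p-a)^((p-a)*(1/a)))
       + Real.Gamma (p*ν+1) * ((1-p/b)^(-(p*ν+1)) * (p-a)^((γ+1/a)*p)))) l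
      (𝓝 (2*(Real.Gamma (a*γ+1) * (a^(a*γ+1) * 1)
       + Real.Gamma (a*ν+1) * ((1-a/b)^(-(a*ν+1)) * 0)))) :=
    ((G1.mul (P1.mul X1)).add (G2.mul (Y.mul X2))).const_mul 2
  have hLa : (2*(Real.Gamma (a*γ+1) * (a^(a*γ+1) * 1)
       + Real.Gamma (a*ν+1) * ((1-a/b)^(-(a*ν+1)) * 0))) = a^(a*γ+1) * (2 * Real.Gamma (a*γ+1)) := by
    ring
  rw [hLa] at h_main
  have hLpos : 0 < a^(a*γ+1) * (2 * Real.Gamma (a*γ+1)) :=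
    mul_pos (Real.rpow_pos_of_pos ha0 _) (by linarith [Real.Gamma_pos_of_pos hga])
  have hinv : Tendsto (fun p : ℝ => 1/p) l (𝓝 (1/a)) :=
    (tendsto_const_nhds.div hid (ne_of_gt ha0))
  have hfin := h_main.rpow hinv (Or.inl (ne_of_gt hLpos))
  have hval : (a^(a*γ+1) * (2 * Real.Gamma (a*γ+1))) ^ (1/a)
      = a ^ (γ + 1/a) * (2 * Real.Gamma (a*γ+1)) ^ (1/a) := by
    rw [Real.mul_rpow (Real.rpow_nonneg ha0.le _) (by positivity),
      ← Real.rpow_mul ha0.le]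
    congr 2
    field_simp
  rw [hval] at hfin
  refine Tendsto.congr' (EventuallyEq.symm ?_) hfin
  · -- eventual equality
    filter_upwards [Ioo_mem_nhdsGT hab] with p hp
    obtain ⟨hpa, hpb⟩ := hp
    have hp0 : 0 < p := lt_trans ha0 hpa
    have hpa0 : 0 < p - a := sub_pos.mpr hpa
    have hgp : 0 < p*γ+1 := pos_mul_add_one hb0 hp0 hpb.le hγ
    have hnp : 0 < p*ν+1 := pos_mul_add_one hb0 hp0 hpb.le hν
    have hFnn : 0 ≤ 2 * ((p/a - 1) ^ (-(p*γ+1)) * Real.Gamma (p*γ+1)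
           + (1 - p/b) ^ (-(p*ν+1)) * Real.Gamma (p*ν+1)) := by
      have g1 := Real.Gamma_pos_of_pos hgp
      have g2 := Real.Gamma_pos_of_pos hnp
      have r1 : (0:ℝ) ≤ (p/a - 1) ^ (-(p*γ+1)) := Real.rpow_nonneg (by
        have : 1 < p/a := (one_lt_div ha0).mpr hpa; linarith) _
      have r2 : (0:ℝ) ≤ (1 - p/b) ^ (-(p*ν+1)) := Real.rpow_nonneg (by
        have : p/b < 1 := (div_lt_one hb0).mpr hpb; linarith) _
      positivity
    have hpa1 : p/a - 1 = (p-a)/a := by field_simp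
    have e1 : γ+1/a = ((γ+1/a)*p)*(1/p) := by field_simp
    have e2 : (γ+1/a)*p - (p*γ+1) = (p-a)*(1/a) := by field_simp; ring
    have key : (p-a)^((γ+1/a)*p) * (2 * ((p/a - 1) ^ (-(p*γ+1)) * Real.Gamma (p*γ+1)
           + (1 - p/b) ^ (-(p*ν+1)) * Real.Gamma (p*ν+1)))
        = 2*(Real.Gamma (p*γ+1) * (a^(p*γ+1) * (p-a)^((p-a)*(1/a)))
         + Real.Gamma (p*ν+1) * ((1-p/b)^(-(p*ν+1)) * (p-a)^((γ+1/a)*p))) := by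
      rw [hpa1]
      have h1 := rpow_shift (p-a) a (p*γ+1) ((γ+1/a)*p) hpa0 ha0
      calc (p-a)^((γ+1/a)*p) * (2 * (((p-a)/a) ^ (-(p*γ+1)) * Real.Gamma (p*γ+1)
           + (1 - p/b) ^ (-(p*ν+1)) * Real.Gamma (p*ν+1)))
          = 2*(((p-a)^((γ+1/a)*p) * ((p-a)/a) ^ (-(p*γ+1))) * Real.Gamma (p*γ+1)
           + Real.Gamma (p*ν+1) * ((1-p/b)^(-(p*ν+1)) * (p-a)^((γ+1/a)*p))) := by ring
        _ = _ := by rw [h1, e2]; ring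
    calc (p - a) ^ (γ + 1/a) * (2 * ((p/a - 1) ^ (-(p*γ+1)) * Real.Gamma (p*γ+1)
           + (1 - p/b) ^ (-(p*ν+1)) * Real.Gamma (p*ν+1))) ^ (1/p)
        = ((p-a)^((γ+1/a)*p))^(1/p) * (2 * ((p/a - 1) ^ (-(p*γ+1)) * Real.Gamma (p*γ+1)
           + (1 - p/b) ^ (-(p*ν+1)) * Real.Gamma (p*ν+1))) ^ (1/p) := by
          rw [← Real.rpow_mul hpa0.le, ← e1]
      _ = ((p-a)^((γ+1/a)*p) * (2 * ((p/a - 1) ^ (-(p*γ+1)) * Real.Gamma (p*γ+1)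
           + (1 - p/b) ^ (-(p*ν+1)) * Real.Gamma (p*ν+1)))) ^ (1/p) :=
          (Real.mul_rpow (Real.rpow_nonneg hpa0.le _) hFnn).symm
      _ = _ := by rw [key]

lemma tendsto_at_b (a b γ ν : ℝ) (ha0 : 0 < a) (hab : a < b) (hγ : -1/b < γ) (hν : -1/b < ν) :
    Tendsto (fun p : ℝ => (b - p) ^ (ν + 1/b) *
        (2 * ((p/a - 1) ^ (-(p*γ+1)) * Real.Gamma (p*γ+1)
           + (1 - p/b) ^ (-(p*ν+1)) * Real.Gamma (p*ν+1))) ^ (1/p))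
      (𝓝[<] b) (𝓝 (b ^ (ν + 1/b) * (2 * Real.Gamma (b*ν+1)) ^ (1/b))) := by
  have hb0 : 0 < b := lt_trans ha0 hab
  have hgb : 0 < b*γ+1 := pos_mul_add_one hb0 hb0 le_rfl hγ
  have hnb : 0 < b*ν+1 := pos_mul_add_one hb0 hb0 le_rfl hν
  set l := 𝓝[<] b with hl
  have hid : Tendsto (fun p : ℝ => p) l (𝓝 b) := tendsto_id.mono_left nhdsWithin_le_nhds
  have hsub : Tendsto (fun p : ℝ => b - p) l (𝓝[>] (0:ℝ)) := by
    rw [tendsto_nhdsWithin_iff]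
    exact ⟨by simpa using (tendsto_const_nhds (x := b)).sub hid,
      eventually_mem_nhdsWithin.mono fun p hp => mem_Ioi.mpr (sub_pos.mpr hp)⟩
  have G1 := gamma_tendsto γ b hgb l hid
  have G2 := gamma_tendsto ν b hnb l hid
  have P1 : Tendsto (fun p : ℝ => b ^ (p*ν+1)) l (𝓝 (b^(b*ν+1))) :=
    tendsto_const_nhds.rpow ((hid.mul_const ν).add_const 1) (Or.inl (ne_of_gt hb0))
  have X1 : Tendsto (fun p : ℝ => (b-p) ^ ((b-p) * (-(1/b)))) l (𝓝 1) :=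
    (tendsto_rpow_self_mul (-(1/b))).comp hsub
  have hexp : 0 < (ν+1/b)*b := by
    have : (ν+1/b)*b = b*ν+1 := by field_simp
    rw [this]; exact hnb
  have X2 : Tendsto (fun p : ℝ => (b-p) ^ ((ν+1/b)*p)) l (𝓝 0) := by
    have h := (hsub.mono_right nhdsWithin_le_nhds).rpow (hid.const_mul (ν+1/b)) (Or.inr hexp)
    rwa [Real.zero_rpow (ne_of_gt hexp)] at h
  have hba' : 0 < b/a - 1 := by
    have := (one_lt_div ha0).mpr hab; linarith
  have Y : Tendsto (fun p : ℝ => (p/a - 1) ^ (-(p*γ+1))) l (𝓝 ((b/a-1) ^ (-(b*γ+1)))) :=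
    ((hid.div_const a).sub_const 1).rpow
      (((hid.mul_const γ).add_const 1).neg) (Or.inl (ne_of_gt hba'))
  have h_main : Tendsto (fun p : ℝ =>
      2*(Real.Gamma (p*γ+1) * ((p/a-1)^(-(p*γ+1)) * (b-p)^((ν+1/b)*p))
       + Real.Gamma (p*ν+1) * (b^(p*ν+1) * (b-p)^((b-p)*(-(1/b)))))) l
      (𝓝 (2*(Real.Gamma (b*γ+1) * ((b/a-1)^(-(b*γ+1)) * 0)
       + Real.Gamma (b*ν+1) * (b^(b*ν+1) * 1)))) :=
    ((G1.mul (Y.mul X2)).add (G2.mul (P1.mul X1))).const_mul 2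
  have hLb : (2*(Real.Gamma (b*γ+1) * ((b/a-1)^(-(b*γ+1)) * 0)
       + Real.Gamma (b*ν+1) * (b^(b*ν+1) * 1))) = b^(b*ν+1) * (2 * Real.Gamma (b*ν+1)) := by
    ring
  rw [hLb] at h_main
  have hLpos : 0 < b^(b*ν+1) * (2 * Real.Gamma (b*ν+1)) :=
    mul_pos (Real.rpow_pos_of_pos hb0 _) (by linarith [Real.Gamma_pos_of_pos hnb])
  have hinv : Tendsto (fun p : ℝ => 1/p) l (𝓝 (1/b)) :=
    (tendsto_const_nhds.div hid (ne_of_gt hb0))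
  have hfin := h_main.rpow hinv (Or.inl (ne_of_gt hLpos))
  have hval : (b^(b*ν+1) * (2 * Real.Gamma (b*ν+1))) ^ (1/b)
      = b ^ (ν + 1/b) * (2 * Real.Gamma (b*ν+1)) ^ (1/b) := by
    rw [Real.mul_rpow (Real.rpow_nonneg hb0.le _) (by positivity),
      ← Real.rpow_mul hb0.le]
    congr 2
    field_simp
  rw [hval] at hfin
  refine Tendsto.congr' (EventuallyEq.symm ?_) hfin
  filter_upwards [Ioo_mem_nhdsLT hab] with p hp
  obtain ⟨hpa, hpb⟩ := hp
  have hp0 : 0 < p := lt_trans ha0 hpa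
  have hbp0 : 0 < b - p := sub_pos.mpr hpb
  have hgp : 0 < p*γ+1 := pos_mul_add_one hb0 hp0 hpb.le hγ
  have hnp : 0 < p*ν+1 := pos_mul_add_one hb0 hp0 hpb.le hν
  have hFnn : 0 ≤ 2 * ((p/a - 1) ^ (-(p*γ+1)) * Real.Gamma (p*γ+1)
         + (1 - p/b) ^ (-(p*ν+1)) * Real.Gamma (p*ν+1)) := by
    have g1 := Real.Gamma_pos_of_pos hgp
    have g2 := Real.Gamma_pos_of_pos hnp
    have r1 : (0:ℝ) ≤ (p/a - 1) ^ (-(p*γ+1)) := Real.rpow_nonneg (by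
      have : 1 < p/a := (one_lt_div ha0).mpr hpa; linarith) _
    have r2 : (0:ℝ) ≤ (1 - p/b) ^ (-(p*ν+1)) := Real.rpow_nonneg (by
      have : p/b < 1 := (div_lt_one hb0).mpr hpb; linarith) _
    positivity
  have hpb1 : 1 - p/b = (b-p)/b := by field_simp
  have e1 : ν+1/b = ((ν+1/b)*p)*(1/p) := by field_simp
  have e2 : (ν+1/b)*p - (p*ν+1) = (b-p)*(-(1/b)) := by field_simp; ring
  have key : (b-p)^((ν+1/b)*p) * (2 * ((p/a - 1) ^ (-(p*γ+1)) * Real.Gamma (p*γ+1)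
         + (1 - p/b) ^ (-(p*ν+1)) * Real.Gamma (p*ν+1)))
      = 2*(Real.Gamma (p*γ+1) * ((p/a-1)^(-(p*γ+1)) * (b-p)^((ν+1/b)*p))
       + Real.Gamma (p*ν+1) * (b^(p*ν+1) * (b-p)^((b-p)*(-(1/b))))) := by
    rw [hpb1]
    have h1 := rpow_shift (b-p) b (p*ν+1) ((ν+1/b)*p) hbp0 hb0
    calc (b-p)^((ν+1/b)*p) * (2 * ((p/a - 1) ^ (-(p*γ+1)) * Real.Gamma (p*γ+1)
         + ((b-p)/b) ^ (-(p*ν+1)) * Real.Gamma (p*ν+1)))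
        = 2*(Real.Gamma (p*γ+1) * ((p/a-1)^(-(p*γ+1)) * (b-p)^((ν+1/b)*p))
         + ((b-p)^((ν+1/b)*p) * ((b-p)/b) ^ (-(p*ν+1))) * Real.Gamma (p*ν+1)) := by ring
      _ = _ := by rw [h1, e2]; ring
  calc (b - p) ^ (ν + 1/b) * (2 * ((p/a - 1) ^ (-(p*γ+1)) * Real.Gamma (p*γ+1)
         + (1 - p/b) ^ (-(p*ν+1)) * Real.Gamma (p*ν+1))) ^ (1/p)
      = ((b-p)^((ν+1/b)*p))^(1/p) * (2 * ((p/a - 1) ^ (-(p*γ+1)) * Real.Gamma (p*γ+1)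
         + (1 - p/b) ^ (-(p*ν+1)) * Real.Gamma (p*ν+1))) ^ (1/p) := by
        rw [← Real.rpow_mul hbp0.le, ← e1]
    _ = ((b-p)^((ν+1/b)*p) * (2 * ((p/a - 1) ^ (-(p*γ+1)) * Real.Gamma (p*γ+1)
         + (1 - p/b) ^ (-(p*ν+1)) * Real.Gamma (p*ν+1)))) ^ (1/p) :=
        (Real.mul_rpow (Real.rpow_nonneg hbp0.le _) hFnn).symm
    _ = _ := by rw [key]

/-- The basic example `f(x) = 1_{{|x|≥1}}|x|^{-1/a}(log|x|)^γ + 1_{{0<|x|<1}}|x|^{-1/b}|log|x||^ν`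
belongs to the Grand Lebesgue space `G(a,b; γ+1/a, ν+1/b)` but not to `G°`: the weighted
norms are uniformly bounded on `(a,b)`, and tend to explicit positive limits at both
endpoints. -/
theorem example_in_G_not_Go (a b γ ν : ℝ) (ha : 1 ≤ a) (hab : a < b)
    (hγ : -1 / b < γ) (hν : -1 / b < ν)
    (f : ℝ → ℝ)
    (hf : ∀ x, f x =
      Set.indicator {x : ℝ | 1 ≤ |x|}
        (fun x => |x| ^ (-(1 / a)) * Real.log |x| ^ γ) x +
      Set.indicator {x : ℝ | 0 < |x| ∧ |x| < 1}
        (fun x => |x| ^ (-(1 / b)) * (abs (Real.log |x|)) ^ ν) x) :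
    (∃ C : ℝ, ∀ p ∈ Set.Ioo a b,
        min ((p - a) ^ (γ + 1 / a)) ((b - p) ^ (ν + 1 / b)) *
          (∫ x : ℝ, |f x| ^ p) ^ (1 / p) ≤ C) ∧
    Tendsto (fun p : ℝ => (b - p) ^ (ν + 1 / b) * (∫ x : ℝ, |f x| ^ p) ^ (1 / p))
      (𝓝[<] b) (𝓝 (b ^ (ν + 1 / b) * (2 * Real.Gamma (b * ν + 1)) ^ (1 / b))) ∧
    0 < b ^ (ν + 1 / b) * (2 * Real.Gamma (b * ν + 1)) ^ (1 / b) ∧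
    Tendsto (fun p : ℝ => (p - a) ^ (γ + 1 / a) * (∫ x : ℝ, |f x| ^ p) ^ (1 / p))
      (𝓝[>] a) (𝓝 (a ^ (γ + 1 / a) * (2 * Real.Gamma (a * γ + 1)) ^ (1 / a))) ∧
    0 < a ^ (γ + 1 / a) * (2 * Real.Gamma (a * γ + 1)) ^ (1 / a) := by
  have ha0 : 0 < a := lt_of_lt_of_le one_pos ha
  have hb0 : 0 < b := lt_trans ha0 hab
  set F : ℝ → ℝ := fun p => 2 * ((p/a - 1) ^ (-(p*γ+1)) * Real.Gamma (p*γ+1)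
         + (1 - p/b) ^ (-(p*ν+1)) * Real.Gamma (p*ν+1)) with hFdef
  have hF : ∀ p ∈ Ioo a b, (∫ x : ℝ, |f x| ^ p) = F p := fun p hp =>
    main_formula a b γ ν p ha0 hb0 hp.1 hp.2
      (by linarith [pos_mul_add_one hb0 (lt_trans ha0 hp.1) hp.2.le hγ])
      (by linarith [pos_mul_add_one hb0 (lt_trans ha0 hp.1) hp.2.le hν]) f hf
  -- the two tendsto statements
  have hIooA : Ioo a b ∈ 𝓝[>] a := Ioo_mem_nhdsGT hab
  have hIooB : Ioo a b ∈ 𝓝[<] b := Ioo_mem_nhdsLT hab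
  have hTa : Tendsto (fun p : ℝ => (p - a) ^ (γ + 1 / a) * (∫ x : ℝ, |f x| ^ p) ^ (1 / p))
      (𝓝[>] a) (𝓝 (a ^ (γ + 1 / a) * (2 * Real.Gamma (a * γ + 1)) ^ (1 / a))) := by
    refine Tendsto.congr' ?_ (tendsto_at_a a b γ ν ha0 hab hγ hν)
    filter_upwards [hIooA] with p hp
    rw [hF p hp]
  have hTb : Tendsto (fun p : ℝ => (b - p) ^ (ν + 1 / b) * (∫ x : ℝ, |f x| ^ p) ^ (1 / p))
      (𝓝[<] b) (𝓝 (b ^ (ν + 1 / b) * (2 * Real.Gamma (b * ν + 1)) ^ (1 / b))) := by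
    refine Tendsto.congr' ?_ (tendsto_at_b a b γ ν ha0 hab hγ hν)
    filter_upwards [hIooB] with p hp
    rw [hF p hp]
  have hga : 0 < a*γ+1 := pos_mul_add_one hb0 ha0 hab.le hγ
  have hnb : 0 < b*ν+1 := pos_mul_add_one hb0 hb0 le_rfl hν
  have hposb : 0 < b ^ (ν + 1 / b) * (2 * Real.Gamma (b * ν + 1)) ^ (1 / b) :=
    mul_pos (Real.rpow_pos_of_pos hb0 _)
      (Real.rpow_pos_of_pos (by linarith [Real.Gamma_pos_of_pos hnb]) _)
  have hposa : 0 < a ^ (γ + 1 / a) * (2 * Real.Gamma (a * γ + 1)) ^ (1 / a) :=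
    mul_pos (Real.rpow_pos_of_pos ha0 _)
      (Real.rpow_pos_of_pos (by linarith [Real.Gamma_pos_of_pos hga]) _)
  refine ⟨?_, hTb, hposb, hTa, hposa⟩
  -- boundedness
  set La := a ^ (γ + 1 / a) * (2 * Real.Gamma (a * γ + 1)) ^ (1 / a) with hLa
  set Lb := b ^ (ν + 1 / b) * (2 * Real.Gamma (b * ν + 1)) ^ (1 / b) with hLb
  set N : ℝ → ℝ := fun p => (∫ x : ℝ, |f x| ^ p) ^ (1 / p) with hN
  have hNnn : ∀ p : ℝ, 0 ≤ N p := fun p =>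
    Real.rpow_nonneg (integral_nonneg fun x => Real.rpow_nonneg (abs_nonneg _) _) _
  -- near a
  have hEa : {p : ℝ | (p - a) ^ (γ + 1/a) * N p < La + 1} ∈ 𝓝[>] a :=
    hTa.eventually_lt_const (lt_add_one La)
  obtain ⟨u, hu, husub⟩ := mem_nhdsGT_iff_exists_Ioc_subset.mp hEa
  obtain ⟨v, hv, hvsub⟩ := mem_nhdsLT_iff_exists_Ico_subset.mp
    (hTb.eventually_lt_const (lt_add_one Lb) : {p : ℝ | (b - p) ^ (ν + 1/b) * N p < Lb + 1} ∈ 𝓝[<] b)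
  set u' := min u ((a+b)/2) with hu'
  set v' := max v ((a+b)/2) with hv'
  have hau' : a < u' := lt_min hu (by linarith)
  have hv'b : v' < b := max_lt hv (by linarith)
  -- continuity on Icc u' v'
  set Φ : ℝ → ℝ := fun p => min ((p - a) ^ (γ + 1 / a)) ((b - p) ^ (ν + 1 / b)) * N p with hΦ
  have hcont : ContinuousOn Φ (Icc u' v') := by
    intro p hp
    have hpa : a < p := lt_of_lt_of_le hau' hp.1
    have hpb : p < b := lt_of_le_of_lt hp.2 hv'b
    have hp0 : 0 < p := lt_trans ha0 hpa
    have hgp : 0 < p*γ+1 := pos_mul_add_one hb0 hp0 hpb.le hγ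
    have hnp : 0 < p*ν+1 := pos_mul_add_one hb0 hp0 hpb.le hν
    have hba1 : 0 < p/a - 1 := by have := (one_lt_div ha0).mpr hpa; linarith
    have hpb1 : 0 < 1 - p/b := by have := (div_lt_one hb0).mpr hpb; linarith
    have hFpos : 0 < F p := by
      have g1 := Real.Gamma_pos_of_pos hgp
      have g2 := Real.Gamma_pos_of_pos hnp
      have r1 := Real.rpow_pos_of_pos hba1 (-(p*γ+1))
      have r2 := Real.rpow_pos_of_pos hpb1 (-(p*ν+1))
      rw [hFdef]; positivity
    have hcF : ContinuousAt F p := by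
      have cG1 : ContinuousAt (fun q : ℝ => Real.Gamma (q*γ+1)) p :=
        gamma_tendsto γ p hgp (𝓝 p) tendsto_id
      have cG2 : ContinuousAt (fun q : ℝ => Real.Gamma (q*ν+1)) p :=
        gamma_tendsto ν p hnp (𝓝 p) tendsto_id
      have c1 : ContinuousAt (fun q : ℝ => (q/a - 1) ^ (-(q*γ+1))) p :=
        ContinuousAt.rpow ((continuousAt_id.div_const a).sub continuousAt_const)
          ((continuousAt_id.mul continuousAt_const).add continuousAt_const).neg
          (Or.inl (ne_of_gt hba1))
      have c2 : ContinuousAt (fun q : ℝ => (1 - q/b) ^ (-(q*ν+1))) p :=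
        ContinuousAt.rpow (continuousAt_const.sub (continuousAt_id.div_const b))
          ((continuousAt_id.mul continuousAt_const).add continuousAt_const).neg
          (Or.inl (ne_of_gt hpb1))
      exact (((c1.mul cG1).add (c2.mul cG2)).const_mul 2)
    have hcN : ContinuousAt N p := by
      have hNeq : (fun q : ℝ => F q ^ (1/q)) =ᶠ[𝓝 p] N := by
        filter_upwards [Ioo_mem_nhds hpa hpb] with q hq
        rw [hN]; simp only; rw [hF q hq]
      refine ContinuousAt.congr ?_ hNeq
      exact ContinuousAt.rpow hcF (continuousAt_const.div continuousAt_id (ne_of_gt hp0))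
        (Or.inl (ne_of_gt hFpos))
    have cw1 : ContinuousAt (fun q : ℝ => (q - a) ^ (γ + 1/a)) p :=
      ContinuousAt.rpow (continuousAt_id.sub continuousAt_const) continuousAt_const
        (Or.inl (ne_of_gt (sub_pos.mpr hpa)))
    have cw2 : ContinuousAt (fun q : ℝ => (b - q) ^ (ν + 1/b)) p :=
      ContinuousAt.rpow (continuousAt_const.sub continuousAt_id) continuousAt_const
        (Or.inl (ne_of_gt (sub_pos.mpr hpb)))
    have : ContinuousAt Φ p := ContinuousAt.mul (ContinuousAt.inf cw1 cw2) hcN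
    exact this.continuousWithinAt
  obtain ⟨C0, hC0⟩ := (isCompact_Icc (a := u') (b := v')).exists_bound_of_continuousOn hcont
  refine ⟨max (max (La + 1) (Lb + 1)) C0, fun p hp => ?_⟩
  have hminnn : 0 ≤ min ((p - a) ^ (γ + 1 / a)) ((b - p) ^ (ν + 1 / b)) :=
    le_min (Real.rpow_nonneg (by linarith [hp.1]) _) (Real.rpow_nonneg (by linarith [hp.2]) _)
  rcases le_or_gt p u' with hcase | hcase
  · have hmem : p ∈ Ioc a u := ⟨hp.1, le_trans hcase (min_le_left _ _)⟩
    have := husub hmem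
    calc min ((p - a) ^ (γ + 1 / a)) ((b - p) ^ (ν + 1 / b)) * N p
        ≤ (p - a) ^ (γ + 1/a) * N p :=
          mul_le_mul_of_nonneg_right (min_le_left _ _) (hNnn p)
      _ ≤ La + 1 := le_of_lt this
      _ ≤ _ := le_trans (le_max_left _ _) (le_max_left _ _)
  rcases le_or_gt v' p with hcase2 | hcase2
  · have hmem : p ∈ Ico v b := ⟨le_trans (le_max_left _ _) hcase2, hp.2⟩
    have := hvsub hmem
    calc min ((p - a) ^ (γ + 1 / a)) ((b - p) ^ (ν + 1 / b)) * N p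
        ≤ (b - p) ^ (ν + 1/b) * N p :=
          mul_le_mul_of_nonneg_right (min_le_right _ _) (hNnn p)
      _ ≤ Lb + 1 := le_of_lt this
      _ ≤ _ := le_trans (le_max_right _ _) (le_max_left _ _)
  · have hmem : p ∈ Icc u' v' := ⟨hcase.le, hcase2.le⟩
    calc min ((p - a) ^ (γ + 1 / a)) ((b - p) ^ (ν + 1 / b)) * N p
        ≤ ‖Φ p‖ := by rw [Real.norm_eq_abs]; exact le_abs_self _
      _ ≤ C0 := hC0 p hmem
      _ ≤ _ := le_max_right _ _
end
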